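/- arXiv:2212.14738 — 12 statements merged into one kernel-verified Lean document; each statement's English description precedes it below -/
import Mathlib

section
/- Let m ≥ 3 be an integer and let α₁, …, α_m ∈ (0, π) be real numbers with α₁ + ⋯ + α_m < (m − 2)π. Then there exists a unique real number x > 0 such that ∑_{i=1}^{m} 2·arcsin( cos(α_i/2) / cosh x ) = 2π. -/
open Real Filter

theorem stmt_0 (m : ℕ) (hm : 3 ≤ m) (α : Fin m → ℝ)
    (hα : ∀ i, α i ∈ Set.Ioo 0 π)
    (hsum : ∑ i, α i < ((m : ℝ) - 2) * π) :
    ∃! x : ℝ, 0 < x ∧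
      ∑ i, 2 * Real.arcsin (Real.cos (α i / 2) / Real.cosh x) = 2 * π := by
  have hpi := Real.pi_pos
  haveI : Nonempty (Fin m) := ⟨⟨0, by omega⟩⟩
  set f : ℝ → ℝ := fun x => ∑ i, 2 * Real.arcsin (Real.cos (α i / 2) / Real.cosh x) with hf
  have hc0 : ∀ i, 0 < Real.cos (α i / 2) := fun i =>
    Real.cos_pos_of_mem_Ioo ⟨by nlinarith [(hα i).1], by nlinarith [(hα i).2]⟩
  have hc1 : ∀ i, Real.cos (α i / 2) ≤ 1 := fun i => Real.cos_le_one _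
  have hmem : ∀ (i : Fin m) (x : ℝ),
      Real.cos (α i / 2) / Real.cosh x ∈ Set.Icc (-1 : ℝ) 1 := by
    intro i x
    constructor
    · have : 0 ≤ Real.cos (α i / 2) / Real.cosh x :=
        div_nonneg (hc0 i).le (Real.cosh_pos x).le
      linarith
    · rw [div_le_one (Real.cosh_pos x)]
      exact (hc1 i).trans (Real.one_le_cosh x)
  -- strict antitonicity on [0, ∞)
  have hanti : StrictAntiOn f (Set.Ici 0) := by
    intro x hx y hy hxy
    apply Finset.sum_lt_sum_of_nonempty Finset.univ_nonempty
    intro i _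
    have hcosh : Real.cosh x < Real.cosh y := by
      rw [Real.cosh_lt_cosh, abs_of_nonneg hx, abs_of_nonneg (hy : (0:ℝ) ≤ y)]
      exact hxy
    have hdiv : Real.cos (α i / 2) / Real.cosh y < Real.cos (α i / 2) / Real.cosh x :=
      div_lt_div_of_pos_left (hc0 i) (Real.cosh_pos x) hcosh
    have := Real.strictMonoOn_arcsin (hmem i y) (hmem i x) hdiv
    linarith
  -- continuity
  have hcont : Continuous f := by
    apply continuous_finset_sum
    intro i _
    exact continuous_const.mul (Real.continuous_arcsin.comp
      (continuous_const.div Real.continuous_cosh fun x => (Real.cosh_pos x).ne'))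
  -- value at 0
  have hf0 : 2 * π < f 0 := by
    have heq : f 0 = ∑ i, (π - α i) := by
      apply Finset.sum_congr rfl
      intro i _
      have h1 : Real.cos (α i / 2) / Real.cosh 0 = Real.cos (α i / 2) := by
        simp [Real.cosh_zero]
      rw [h1, show Real.cos (α i / 2) = Real.sin (π / 2 - α i / 2) by
        rw [Real.sin_pi_div_two_sub],
        Real.arcsin_sin (by nlinarith [(hα i).2]) (by nlinarith [(hα i).1])]
      ring
    rw [heq, Finset.sum_sub_distrib, Finset.sum_const, Finset.card_univ,
      Fintype.card_fin, nsmul_eq_mul]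
    nlinarith
  -- limit at infinity
  have hcosh_top : Tendsto Real.cosh atTop atTop := by
    apply tendsto_atTop_mono (fun x => ?_)
      (Filter.Tendsto.atTop_div_const two_pos Real.tendsto_exp_atTop)
    rw [Real.cosh_eq]
    have := Real.exp_pos (-x)
    linarith
  have hlim : Tendsto f atTop (nhds 0) := by
    have h : Tendsto f atTop (nhds (∑ i : Fin m, 2 * Real.arcsin 0)) := by
      apply tendsto_finset_sum
      intro i _
      exact (Tendsto.const_mul _ ((Real.continuous_arcsin.tendsto 0).comp
        (Tendsto.div_atTop tendsto_const_nhds hcosh_top)))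
    simpa using h
  -- pick X with f X < 2π
  obtain ⟨X, hX2, hX1⟩ :=
    ((hlim.eventually (eventually_lt_nhds (by positivity : (0:ℝ) < 2 * π))).and
      (eventually_ge_atTop (1 : ℝ))).exists
  have hX0 : (0:ℝ) ≤ X := by linarith
  -- IVT
  obtain ⟨x, hxIcc, hxval⟩ := intermediate_value_Icc' hX0 hcont.continuousOn
    ⟨hX2.le, hf0.le⟩
  have hxpos : 0 < x := by
    rcases lt_or_eq_of_le hxIcc.1 with h | h
    · exact h
    · exfalso; rw [← h] at hxval; linarith
  refine ⟨x, ⟨hxpos, hxval⟩, ?_⟩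
  rintro y ⟨hy, hyval⟩
  exact hanti.injOn hy.le hxpos.le (by simp only [f] at hxval ⊢; rw [hyval, hxval])
end

section
/- Fix a real number x > 0. The function β : (0, π/2) → ℝ defined by β(α) = arcsin( cos α / cosh x ) is strictly concave on the open interval (0, π/2). -/
open Real

theorem stmt_3 (x : ℝ) (hx : 0 < x) :
    StrictConcaveOn ℝ (Set.Ioo 0 (π / 2))
      (fun α : ℝ => Real.arcsin (Real.cos α / Real.cosh x)) := by
  set k := Real.cosh x with hkdef
  have hk1 : 1 < k := Real.one_lt_cosh.mpr (ne_of_gt hx)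
  have hk0 : 0 < k := lt_trans one_pos hk1
  have hD : ∀ α : ℝ, 0 < k ^ 2 - Real.cos α ^ 2 := by
    intro α
    nlinarith [Real.neg_one_le_cos α, Real.cos_le_one α]
  have hDs : ∀ α : ℝ, 0 < Real.sqrt (k ^ 2 - Real.cos α ^ 2) :=
    fun α => Real.sqrt_pos.mpr (hD α)
  -- first derivative
  have hderiv1 : ∀ α : ℝ, HasDerivAt (fun α : ℝ => Real.arcsin (Real.cos α / k))
      (-Real.sin α / Real.sqrt (k ^ 2 - Real.cos α ^ 2)) α := by
    intro α
    have hu : |Real.cos α / k| < 1 := by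
      rw [abs_div, abs_of_pos hk0, div_lt_one hk0]
      exact lt_of_le_of_lt (Real.abs_cos_le_one α) hk1
    have h1 : Real.cos α / k ≠ -1 := by
      intro h; rw [h] at hu; simp at hu
    have h2 : Real.cos α / k ≠ 1 := by
      intro h; rw [h] at hu; simp at hu
    have hinner : HasDerivAt (fun α : ℝ => Real.cos α / k) (-Real.sin α / k) α :=
      (Real.hasDerivAt_cos α).div_const k
    have hcomp := (Real.hasDerivAt_arcsin h1 h2).comp α hinner
    refine hcomp.congr_deriv ?_
    have hsq : Real.sqrt (1 - (Real.cos α / k) ^ 2)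
        = Real.sqrt (k ^ 2 - Real.cos α ^ 2) / k := by
      rw [eq_div_iff (ne_of_gt hk0)]
      nth_rewrite 2 [← Real.sqrt_sq hk0.le]
      have h0 : (0:ℝ) ≤ 1 - (Real.cos α / k) ^ 2 := by
        nlinarith [sq_abs (Real.cos α / k), abs_nonneg (Real.cos α / k)]
      rw [← Real.sqrt_mul h0]
      congr 1
      field_simp
    rw [hsq]
    field_simp [ne_of_gt (hDs α)]
  have hfd : (deriv fun α : ℝ => Real.arcsin (Real.cos α / k))
      = fun α : ℝ => -Real.sin α / Real.sqrt (k ^ 2 - Real.cos α ^ 2) := by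
    funext α; exact (hderiv1 α).deriv
  apply strictConcaveOn_of_deriv2_neg (convex_Ioo _ _)
  · exact (Real.continuous_arcsin.comp (Real.continuous_cos.div_const k)).continuousOn
  · intro α hα
    rw [interior_Ioo] at hα
    obtain ⟨hα0, hα2⟩ := hα
    have hcos : 0 < Real.cos α := Real.cos_pos_of_mem_Ioo ⟨by linarith [Real.pi_pos], hα2⟩
    set D := Real.sqrt (k ^ 2 - Real.cos α ^ 2) with hDdef
    have hDpos : 0 < D := hDs α
    have hD2 : D ^ 2 = k ^ 2 - Real.cos α ^ 2 := Real.sq_sqrt (hD α).le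
    have hpyth : Real.sin α ^ 2 + Real.cos α ^ 2 = 1 := Real.sin_sq_add_cos_sq α
    -- derivative of inner polynomial
    have hh : HasDerivAt (fun α : ℝ => k ^ 2 - Real.cos α ^ 2)
        (2 * Real.sin α * Real.cos α) α := by
      have h1 := (Real.hasDerivAt_cos α).pow 2
      have h2 := (hasDerivAt_const α (k ^ 2)).sub h1
      refine h2.congr_deriv ?_
      simp; ring
    have hsq : HasDerivAt (fun α : ℝ => Real.sqrt (k ^ 2 - Real.cos α ^ 2))
        (Real.sin α * Real.cos α / D) α := by
      have h1 := (Real.hasDerivAt_sqrt (ne_of_gt (hD α))).comp α hh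
      refine h1.congr_deriv ?_
      rw [← hDdef]
      field_simp
    have hnum : HasDerivAt (fun α : ℝ => -Real.sin α) (-Real.cos α) α :=
      (Real.hasDerivAt_sin α).neg
    have hg := hnum.div hsq (ne_of_gt hDpos)
    have hval : (-Real.cos α * D - -Real.sin α * (Real.sin α * Real.cos α / D)) / D ^ 2
        = Real.cos α * (1 - k ^ 2) / D ^ 3 := by
      field_simp
      linear_combination hpyth - hD2
    rw [hval] at hg
    have : deriv^[2] (fun α : ℝ => Real.arcsin (Real.cos α / k)) α
        = Real.cos α * (1 - k ^ 2) / D ^ 3 := by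
      rw [Function.iterate_succ, Function.iterate_one, Function.comp_apply, hfd]
      exact hg.deriv
    rw [this]
    apply div_neg_of_neg_of_pos
    · exact mul_neg_of_pos_of_neg hcos (by nlinarith)
    · positivity
end

section
/- Fix a real number x > 0 and let α₁, α₂ ∈ (0, π/2) with α₁ ≠ α₂. Then arcsin( cos((α₁ + α₂)/2) / cosh x ) > ( arcsin( cos α₁ / cosh x ) + arcsin( cos α₂ / cosh x ) ) / 2. -/
open Real

theorem stmt_4 (x : ℝ) (hx : 0 < x) (α₁ α₂ : ℝ)
    (h₁ : α₁ ∈ Set.Ioo 0 (π / 2)) (h₂ : α₂ ∈ Set.Ioo 0 (π / 2))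
    (hne : α₁ ≠ α₂) :
    (Real.arcsin (Real.cos α₁ / Real.cosh x) +
        Real.arcsin (Real.cos α₂ / Real.cosh x)) / 2 <
      Real.arcsin (Real.cos ((α₁ + α₂) / 2) / Real.cosh x) := by
  have hc : 1 < Real.cosh x := Real.one_lt_cosh.mpr (ne_of_gt hx)
  set c := Real.cosh x with hcdef
  have hc0 : (0 : ℝ) < c := lt_trans one_pos hc
  set f : ℝ → ℝ := fun α => Real.arcsin (Real.cos α / c) with hfdef
  -- derivative of f at every point
  have hD : ∀ α : ℝ, 0 < c ^ 2 - Real.cos α ^ 2 := by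
    intro α
    nlinarith [Real.neg_one_le_cos α, Real.cos_le_one α]
  have hderiv : ∀ α : ℝ,
      HasDerivAt f (-Real.sin α / Real.sqrt (c ^ 2 - Real.cos α ^ 2)) α := by
    intro α
    have hlt : |Real.cos α / c| < 1 := by
      rw [abs_div, abs_of_pos hc0, div_lt_one hc0]
      calc |Real.cos α| ≤ 1 := Real.abs_cos_le_one α
        _ < c := hc
    have hne1 : Real.cos α / c ≠ 1 := by
      intro h; rw [h] at hlt; simp at hlt
    have hnem1 : Real.cos α / c ≠ -1 := by
      intro h; rw [h] at hlt; simp at hlt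
    have h1 : HasDerivAt (fun α : ℝ => Real.cos α / c) (-Real.sin α / c) α :=
      (Real.hasDerivAt_cos α).div_const c
    have h2 := (Real.hasDerivAt_arcsin hnem1 hne1).comp α h1
    have hs : Real.sqrt (c ^ 2 - Real.cos α ^ 2)
        = c * Real.sqrt (1 - (Real.cos α / c) ^ 2) := by
      rw [← Real.sqrt_sq hc0.le, ← Real.sqrt_mul (sq_nonneg c)]
      congr 1
      field_simp
      rw [Real.sq_sqrt (sq_nonneg c)]
    have heq : 1 / Real.sqrt (1 - (Real.cos α / c) ^ 2) * (-Real.sin α / c)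
        = -Real.sin α / Real.sqrt (c ^ 2 - Real.cos α ^ 2) := by
      rw [hs, div_mul_div_comm, one_mul, mul_comm (Real.sqrt _) c]
    exact heq ▸ h2
  -- strict concavity on Ioo 0 (π/2)
  have hanti : StrictAntiOn (deriv f) (Set.Ioo 0 (π / 2)) := by
    intro a ha b hb hab
    rw [(hderiv a).deriv, (hderiv b).deriv]
    have hsa : 0 < Real.sin a := Real.sin_pos_of_pos_of_lt_pi ha.1
      (lt_trans ha.2 (by linarith [Real.pi_pos]))
    have hsb : 0 < Real.sin b := Real.sin_pos_of_pos_of_lt_pi hb.1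
      (lt_trans hb.2 (by linarith [Real.pi_pos]))
    have ha1 := ha.1; have ha2 := ha.2; have hb1 := hb.1; have hb2 := hb.2
    have hDa := hD a
    have hDb := hD b
    have hsqa : 0 < Real.sqrt (c ^ 2 - Real.cos a ^ 2) := Real.sqrt_pos.mpr hDa
    have hsqb : 0 < Real.sqrt (c ^ 2 - Real.cos b ^ 2) := Real.sqrt_pos.mpr hDb
    rw [neg_div, neg_div, neg_lt_neg_iff, div_lt_div_iff₀ hsqa hsqb]
    have hsin : Real.sin a < Real.sin b := by
      apply Real.strictMonoOn_sin ⟨by linarith [Real.pi_pos], ha2.le⟩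
        ⟨by linarith [Real.pi_pos], hb2.le⟩ hab
    apply lt_of_pow_lt_pow_left₀ 2 (by positivity)
    rw [mul_pow, mul_pow, Real.sq_sqrt hDa.le, Real.sq_sqrt hDb.le]
    have hca : Real.sin a ^ 2 + Real.cos a ^ 2 = 1 := Real.sin_sq_add_cos_sq a
    have hcb : Real.sin b ^ 2 + Real.cos b ^ 2 = 1 := Real.sin_sq_add_cos_sq b
    nlinarith [mul_pos (show (0:ℝ) < c^2 - 1 by nlinarith)
      (mul_pos (sub_pos.mpr hsin) (add_pos hsa hsb))]
  have hcont : ContinuousOn f (Set.Ioo 0 (π / 2)) := by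
    apply Continuous.continuousOn
    exact Real.continuous_arcsin.comp (Real.continuous_cos.div_const c)
  have hconc : StrictConcaveOn ℝ (Set.Ioo 0 (π / 2)) f := by
    apply StrictAntiOn.strictConcaveOn_of_deriv (convex_Ioo _ _) hcont
    rwa [interior_Ioo]
  have key := hconc.2 h₁ h₂ hne (by norm_num : (0:ℝ) < 1/2)
    (by norm_num : (0:ℝ) < 1/2) (by norm_num)
  have : f ((α₁ + α₂) / 2) = f ((1/2 : ℝ) • α₁ + (1/2 : ℝ) • α₂) := by
    norm_num; ring_nf
  simp only [smul_eq_mul] at key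
  have h' : (1/2 : ℝ) * α₁ + (1/2 : ℝ) * α₂ = (α₁ + α₂) / 2 := by ring
  rw [h'] at key
  calc (Real.arcsin (Real.cos α₁ / c) + Real.arcsin (Real.cos α₂ / c)) / 2
      = (1/2 : ℝ) * f α₁ + (1/2 : ℝ) * f α₂ := by simp [hfdef]; ring
    _ < f ((α₁ + α₂) / 2) := key
    _ = Real.arcsin (Real.cos ((α₁ + α₂) / 2) / c) := rfl
end

section
/- Let x > 0 and θ₁, θ₂ ∈ (0, π) be real numbers satisfying cos(π/3) = cosh x · sin(θ₁/2), cos(π/6) = cosh x · sin(θ₂/2), and 2θ₁ + 4θ₂ = 2π. Then cosh x = 3/2, i.e. the inscribed circle radius is x = arccosh(3/2). -/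
open Real

/-- Since Mathlib has no `Real.arcosh`, the conclusion `x = arccosh (3/2)` is
expressed via the explicit formula `arccosh y = log (y + √(y² - 1))`. -/
theorem stmt_5 (x θ₁ θ₂ : ℝ) (hx : 0 < x)
    (hθ₁ : θ₁ ∈ Set.Ioo 0 π) (hθ₂ : θ₂ ∈ Set.Ioo 0 π)
    (e₁ : Real.cos (π / 3) = Real.cosh x * Real.sin (θ₁ / 2))
    (e₂ : Real.cos (π / 6) = Real.cosh x * Real.sin (θ₂ / 2))
    (e₃ : 2 * θ₁ + 4 * θ₂ = 2 * π) :
    Real.cosh x = 3 / 2 ∧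
      x = Real.log (3 / 2 + Real.sqrt ((3 / 2) ^ 2 - 1)) := by
  have hθ : θ₁ / 2 = π / 2 - θ₂ := by linarith
  have h1 : Real.sin (θ₁ / 2) = Real.cos θ₂ := by
    rw [hθ, Real.sin_pi_div_two_sub]
  have h2 : Real.cos θ₂ = 1 - 2 * Real.sin (θ₂ / 2) ^ 2 := by
    have h3 := Real.sin_sq_add_cos_sq (θ₂ / 2)
    have h4 : Real.cos θ₂ = 2 * Real.cos (θ₂ / 2) ^ 2 - 1 := by
      have := Real.cos_two_mul (θ₂ / 2)
      rw [show 2 * (θ₂ / 2) = θ₂ by ring] at this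
      linarith
    nlinarith
  rw [Real.cos_pi_div_three] at e₁
  rw [Real.cos_pi_div_six] at e₂
  set c := Real.cosh x with hc
  set s := Real.sin (θ₂ / 2) with hs
  have hc1 : 1 ≤ c := Real.one_le_cosh x
  have key : 1 / 2 = c - 2 * c * s ^ 2 := by
    rw [e₁, h1, h2]; ring
  have hcs : c * s = Real.sqrt 3 / 2 := e₂.symm
  have hcs2 : (c * s) ^ 2 = 3 / 4 := by
    rw [hcs]
    rw [div_pow, Real.sq_sqrt (by norm_num : (3:ℝ) ≥ 0)]
    norm_num
  have hquad : 2 * c ^ 2 - c - 3 = 0 := by nlinarith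
  have hceq : c = 3 / 2 := by nlinarith
  refine ⟨hceq, ?_⟩
  have hsinh : Real.sinh x = Real.sqrt ((3/2)^2 - 1) := by
    have h5 : Real.sinh x ^ 2 = (3/2)^2 - 1 := by
      have := Real.cosh_sq x
      nlinarith
    have hpos : 0 ≤ Real.sinh x := le_of_lt (by positivity)
    rw [← h5, Real.sqrt_sq hpos]
  have hexp : Real.exp x = 3 / 2 + Real.sqrt ((3/2)^2 - 1) := by
    rw [← hsinh, ← hceq]
    rw [hc, Real.cosh_eq, Real.sinh_eq]
    ring
  rw [← hexp, Real.log_exp]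
end

section
/- The exact identity 2·arcsin(1/3) + 4·arcsin(1/√3) = π holds, where arcsin is the real inverse sine function. -/
open Real

theorem stmt_6 :
    2 * Real.arcsin (1 / 3) + 4 * Real.arcsin (1 / Real.sqrt 3) = π := by
  set b := Real.arcsin (1 / Real.sqrt 3) with hb
  have hb0 : 0 ≤ b := Real.arcsin_nonneg.2 (by positivity)
  have hb2 : b ≤ π / 2 := Real.arcsin_le_pi_div_two _
  have hsinb : Real.sin b = 1 / Real.sqrt 3 :=
    Real.sin_arcsin (by
      have : (0:ℝ) < Real.sqrt 3 := by positivity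
      have : (0:ℝ) ≤ 1 / Real.sqrt 3 := by positivity
      linarith) (by
      rw [div_le_one (by positivity)]
      nlinarith [Real.sq_sqrt (by norm_num : (3:ℝ) ≥ 0), Real.sqrt_nonneg 3])
  have hkey : Real.arcsin (1 / 3) = π / 2 - 2 * b := by
    have hsin : Real.sin (π / 2 - 2 * b) = 1 / 3 := by
      rw [Real.sin_pi_div_two_sub, Real.cos_two_mul', hsinb]
      have h3 : Real.sqrt 3 ^ 2 = 3 := Real.sq_sqrt (by norm_num)
      have h4 := Real.sin_sq_add_cos_sq b
      have h5 : Real.sin b ^ 2 = 1 / 3 := by rw [hsinb, div_pow, one_pow, h3]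
      field_simp
      nlinarith
    rw [← hsin, Real.arcsin_sin (by linarith) (by linarith)]
  rw [hkey]; ring
end

section
/- Fix an integer l ≥ 4 and a nonnegative integer w. The Diophantine system in nonnegative integers A₁, …, A_{l−1}, B₃, …, B_l given by ∑_{i=1}^{l−1} A_i = l, ∑_{j=3}^{l} B_j = w, and ∑_{i=1}^{l−1} i·A_i + ∑_{j=3}^{l} j·B_j = 2(l + w − 1) has a solution if and only if 0 ≤ w ≤ l − 2. Consequently, for any solution, the number n = 2(l + w − 1) satisfies 2l − 2 ≤ n ≤ 4l − 6. -/
theorem stmt_7 (l : ℕ) (hl : 4 ≤ l) (w : ℕ) :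
    ((∃ A B : ℕ → ℕ,
        (∑ i ∈ Finset.Icc 1 (l - 1), A i = l) ∧
        (∑ j ∈ Finset.Icc 3 l, B j = w) ∧
        (∑ i ∈ Finset.Icc 1 (l - 1), i * A i + ∑ j ∈ Finset.Icc 3 l, j * B j
          = 2 * (l + w - 1))) ↔ w ≤ l - 2) ∧
    (w ≤ l - 2 →
      2 * l - 2 ≤ 2 * (l + w - 1) ∧ 2 * (l + w - 1) ≤ 4 * l - 6) := by
  constructor
  · constructor
    · rintro ⟨A, B, hA, hB, hS⟩
      have h1 : l ≤ ∑ i ∈ Finset.Icc 1 (l - 1), i * A i := by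
        conv_lhs => rw [← hA]
        apply Finset.sum_le_sum
        intro i hi
        simp only [Finset.mem_Icc] at hi
        nlinarith [hi.1]
      have h2 : 3 * w ≤ ∑ j ∈ Finset.Icc 3 l, j * B j := by
        rw [← hB, Finset.mul_sum]
        apply Finset.sum_le_sum
        intro j hj
        simp only [Finset.mem_Icc] at hj
        nlinarith [hj.1]
      omega
    · intro hw
      refine ⟨fun i => (if i = 1 then w + 2 else 0) + (if i = 2 then l - w - 2 else 0),
        fun j => if j = 3 then w else 0, ?_, ?_, ?_⟩
      · rw [Finset.sum_add_distrib, Finset.sum_ite_eq' (Finset.Icc 1 (l-1)) 1,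
          Finset.sum_ite_eq' (Finset.Icc 1 (l-1)) 2]
        simp only [Finset.mem_Icc]
        rw [if_pos (by omega), if_pos (by omega)]
        omega
      · rw [Finset.sum_ite_eq' (Finset.Icc 3 l) 3]
        rw [if_pos (by simp [Finset.mem_Icc]; omega)]
      · have e1 : ∀ i : ℕ, i * ((if i = 1 then w + 2 else 0) + (if i = 2 then l - w - 2 else 0))
            = (if i = 1 then 1 * (w + 2) else 0) + (if i = 2 then 2 * (l - w - 2) else 0) := by
          intro i
          by_cases h1 : i = 1 <;> by_cases h2 : i = 2 <;> simp [h1, h2] <;> omega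
        have e2 : ∀ j : ℕ, j * (if j = 3 then w else 0) = (if j = 3 then 3 * w else 0) := by
          intro j; by_cases h : j = 3 <;> simp [h]
        simp only [e1, e2]
        rw [Finset.sum_add_distrib, Finset.sum_ite_eq' (Finset.Icc 1 (l-1)) 1,
          Finset.sum_ite_eq' (Finset.Icc 1 (l-1)) 2, Finset.sum_ite_eq' (Finset.Icc 3 l) 3]
        simp only [Finset.mem_Icc]
        rw [if_pos (by omega), if_pos (by omega), if_pos (by omega)]
        omega
  · intro hw
    omega
end

section
/- Fix an integer l ≥ 4 and nonnegative integers A₁, …, A_{l−1}, B₃, …, B_l with w := ∑_{j=3}^{l} B_j satisfying ∑_{i=1}^{l−1} A_i = l and ∑_{i=1}^{l−1} i·A_i + ∑_{j=3}^{l} j·B_j = 2(l + w − 1). Define h(β) = ∑_{i=1}^{l−1} i·A_i·2·arcsin( 2·cos(π/(3i))·sin(β/2) ) + ∑_{j=3}^{l} j·B_j·2·arcsin( 2·cos(π/j)·sin(β/2) ) − 2π and K_l = 2·arcsin( 1 / (2·cos(π/(3(l−1)))) ). Then h(0) = −2π < 0 and h(K_l) ≥ 0. -/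
open Real

lemma arcsin_key (θ t : ℝ) (hθ0 : 0 ≤ θ) (hθ : θ ≤ π / 2) (ht0 : 0 ≤ t)
    (ht2 : t < π / 2) (htθ : t ≤ θ) :
    π / 2 - θ ≤ Real.arcsin (Real.cos θ / Real.cos t) := by
  have hpi := Real.pi_pos
  have hct : Real.cos θ ≤ Real.cos t :=
    Real.cos_le_cos_of_nonneg_of_le_pi ht0 (by linarith) htθ
  have hcθ : 0 ≤ Real.cos θ := Real.cos_nonneg_of_mem_Icc ⟨by linarith, hθ⟩
  have hctpos : 0 < Real.cos t := Real.cos_pos_of_mem_Ioo ⟨by linarith, ht2⟩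
  have hct1 : Real.cos t ≤ 1 := Real.cos_le_one t
  have h1 : Real.cos θ ≤ Real.cos θ / Real.cos t := by
    rw [le_div_iff₀ hctpos]
    nlinarith
  have h2 : Real.cos θ / Real.cos t ≤ 1 := by
    rw [div_le_one hctpos]; exact hct
  calc π / 2 - θ = Real.arcsin (Real.cos θ) := by
        rw [← Real.sin_pi_div_two_sub, Real.arcsin_sin (by linarith) (by linarith)]
    _ ≤ Real.arcsin (Real.cos θ / Real.cos t) := Real.monotone_arcsin h1

theorem stmt_10 (l : ℕ) (hl : 4 ≤ l) (A B : ℕ → ℕ)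
    (hA : ∑ i ∈ Finset.Icc 1 (l - 1), A i = l)
    (hdeg : ∑ i ∈ Finset.Icc 1 (l - 1), i * A i + ∑ j ∈ Finset.Icc 3 l, j * B j
      = 2 * (l + (∑ j ∈ Finset.Icc 3 l, B j) - 1)) :
    (fun β : ℝ =>
        (∑ i ∈ Finset.Icc 1 (l - 1),
            (i : ℝ) * (A i : ℝ) *
              (2 * Real.arcsin (2 * Real.cos (π / (3 * (i : ℝ))) * Real.sin (β / 2)))) +
          (∑ j ∈ Finset.Icc 3 l,
            (j : ℝ) * (B j : ℝ) *
              (2 * Real.arcsin (2 * Real.cos (π / (j : ℝ)) * Real.sin (β / 2)))) -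
          2 * π) 0 = -(2 * π) ∧
    (fun β : ℝ =>
        (∑ i ∈ Finset.Icc 1 (l - 1),
            (i : ℝ) * (A i : ℝ) *
              (2 * Real.arcsin (2 * Real.cos (π / (3 * (i : ℝ))) * Real.sin (β / 2)))) +
          (∑ j ∈ Finset.Icc 3 l,
            (j : ℝ) * (B j : ℝ) *
              (2 * Real.arcsin (2 * Real.cos (π / (j : ℝ)) * Real.sin (β / 2)))) -
          2 * π) 0 < 0 ∧
    0 ≤ (fun β : ℝ =>
        (∑ i ∈ Finset.Icc 1 (l - 1),
            (i : ℝ) * (A i : ℝ) *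
              (2 * Real.arcsin (2 * Real.cos (π / (3 * (i : ℝ))) * Real.sin (β / 2)))) +
          (∑ j ∈ Finset.Icc 3 l,
            (j : ℝ) * (B j : ℝ) *
              (2 * Real.arcsin (2 * Real.cos (π / (j : ℝ)) * Real.sin (β / 2)))) -
          2 * π) (2 * Real.arcsin (1 / (2 * Real.cos (π / (3 * ((l : ℝ) - 1)))))) := by
  have hpi := Real.pi_pos
  refine ⟨?_, ?_, ?_⟩
  · simp [Real.arcsin_zero]
  · simp [Real.arcsin_zero]
    positivity
  · simp only
    set t : ℝ := π / (3 * ((l : ℝ) - 1)) with htdef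
    have hl1 : (4 : ℝ) ≤ (l : ℝ) := by exact_mod_cast hl
    have hldenom : (0 : ℝ) < 3 * ((l : ℝ) - 1) := by linarith
    have ht0 : 0 ≤ t := by positivity
    have ht9 : t ≤ π / 9 := by
      rw [htdef]
      apply div_le_div_of_nonneg_left hpi.le (by norm_num) (by linarith)
    have ht2 : t < π / 2 := by linarith
    have hctpos : 0 < Real.cos t := Real.cos_pos_of_mem_Ioo ⟨by linarith, ht2⟩
    have hct_half : (1 : ℝ) / 2 ≤ Real.cos t := by
      have := Real.cos_le_cos_of_nonneg_of_le_pi ht0 (by linarith) (show t ≤ π / 3 by linarith)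
      rwa [Real.cos_pi_div_three] at this
    set x : ℝ := 1 / (2 * Real.cos t) with hxdef
    have hx0 : 0 < x := by positivity
    have hx1 : x ≤ 1 := by
      rw [hxdef, div_le_one (by positivity)]; linarith
    have hhalf : (2 * Real.arcsin x) / 2 = Real.arcsin x := by ring
    have hsin : Real.sin ((2 * Real.arcsin x) / 2) = x := by
      rw [hhalf, Real.sin_arcsin (by linarith) hx1]
    simp only [hsin]
    -- bound on the first sum
    have hA' : ∀ i ∈ Finset.Icc 1 (l - 1),
        (A i : ℝ) * ((i : ℝ) * π - 2 * π / 3) ≤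
          (i : ℝ) * (A i : ℝ) * (2 * Real.arcsin (2 * Real.cos (π / (3 * (i : ℝ))) * x)) := by
      intro i hi
      rw [Finset.mem_Icc] at hi
      have hi1 : (1 : ℝ) ≤ (i : ℝ) := by exact_mod_cast hi.1
      have hil : (i : ℝ) ≤ (l : ℝ) - 1 := by
        have : (i : ℝ) ≤ ((l - 1 : ℕ) : ℝ) := by exact_mod_cast hi.2
        rwa [Nat.cast_sub (by omega), Nat.cast_one] at this
      have hθpos : (0 : ℝ) < 3 * (i : ℝ) := by linarith
      set θ : ℝ := π / (3 * (i : ℝ)) with hθdef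
      have hθ0 : 0 ≤ θ := by positivity
      have hθ3 : θ ≤ π / 3 := by
        rw [hθdef]
        apply div_le_div_of_nonneg_left hpi.le (by norm_num) (by linarith)
      have htθ : t ≤ θ := by
        rw [htdef, hθdef]
        apply div_le_div_of_nonneg_left hpi.le hθpos (by linarith)
      have hx : 2 * Real.cos θ * x = Real.cos θ / Real.cos t := by
        rw [hxdef]; field_simp
      have harc : π / 2 - θ ≤ Real.arcsin (2 * Real.cos θ * x) := by
        rw [hx]; exact arcsin_key θ t hθ0 (by linarith) ht0 ht2 htθ
      have hi0 : (i : ℝ) ≠ 0 := by linarith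
      calc (A i : ℝ) * ((i : ℝ) * π - 2 * π / 3)
          = ((i : ℝ) * (A i : ℝ)) * (2 * (π / 2 - θ)) := by
            rw [hθdef]; field_simp
        _ ≤ ((i : ℝ) * (A i : ℝ)) * (2 * Real.arcsin (2 * Real.cos θ * x)) := by
            apply mul_le_mul_of_nonneg_left (by linarith) (by positivity)
    have hB' : ∀ j ∈ Finset.Icc 3 l,
        (B j : ℝ) * ((j : ℝ) * π - 2 * π) ≤
          (j : ℝ) * (B j : ℝ) * (2 * Real.arcsin (2 * Real.cos (π / (j : ℝ)) * x)) := by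
      intro j hj
      rw [Finset.mem_Icc] at hj
      have hj3 : (3 : ℝ) ≤ (j : ℝ) := by exact_mod_cast hj.1
      have hjl : (j : ℝ) ≤ (l : ℝ) := by exact_mod_cast hj.2
      set θ : ℝ := π / (j : ℝ) with hθdef
      have hθ0 : 0 ≤ θ := by positivity
      have hθ3 : θ ≤ π / 3 := by
        rw [hθdef]
        apply div_le_div_of_nonneg_left hpi.le (by norm_num) hj3
      have htθ : t ≤ θ := by
        rw [htdef, hθdef]
        apply div_le_div_of_nonneg_left hpi.le (by linarith) (by linarith)
      have hx : 2 * Real.cos θ * x = Real.cos θ / Real.cos t := by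
        rw [hxdef]; field_simp
      have harc : π / 2 - θ ≤ Real.arcsin (2 * Real.cos θ * x) := by
        rw [hx]; exact arcsin_key θ t hθ0 (by linarith) ht0 ht2 htθ
      have hj0 : (j : ℝ) ≠ 0 := by linarith
      calc (B j : ℝ) * ((j : ℝ) * π - 2 * π)
          = ((j : ℝ) * (B j : ℝ)) * (2 * (π / 2 - θ)) := by
            rw [hθdef]; field_simp
        _ ≤ ((j : ℝ) * (B j : ℝ)) * (2 * Real.arcsin (2 * Real.cos θ * x)) := by
            apply mul_le_mul_of_nonneg_left (by linarith) (by positivity)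
    have hsumA := Finset.sum_le_sum hA'
    have hsumB := Finset.sum_le_sum hB'
    have heqA : ∑ i ∈ Finset.Icc 1 (l - 1), (A i : ℝ) * ((i : ℝ) * π - 2 * π / 3)
        = (∑ i ∈ Finset.Icc 1 (l - 1), (i : ℝ) * (A i : ℝ)) * π
          - (2 * π / 3) * (∑ i ∈ Finset.Icc 1 (l - 1), (A i : ℝ)) := by
      rw [Finset.sum_mul, Finset.mul_sum, ← Finset.sum_sub_distrib]
      exact Finset.sum_congr rfl fun i _ => by ring
    have heqB : ∑ j ∈ Finset.Icc 3 l, (B j : ℝ) * ((j : ℝ) * π - 2 * π)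
        = (∑ j ∈ Finset.Icc 3 l, (j : ℝ) * (B j : ℝ)) * π
          - (2 * π) * (∑ j ∈ Finset.Icc 3 l, (B j : ℝ)) := by
      rw [Finset.sum_mul, Finset.mul_sum, ← Finset.sum_sub_distrib]
      exact Finset.sum_congr rfl fun j _ => by ring
    have hA2 : (∑ i ∈ Finset.Icc 1 (l - 1), (A i : ℝ)) = (l : ℝ) := by
      exact_mod_cast hA
    have h1 : 1 ≤ l + ∑ j ∈ Finset.Icc 3 l, B j := by omega
    have hdeg' : (∑ i ∈ Finset.Icc 1 (l - 1), (i : ℝ) * (A i : ℝ))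
        + (∑ j ∈ Finset.Icc 3 l, (j : ℝ) * (B j : ℝ))
        = 2 * ((l : ℝ) + (∑ j ∈ Finset.Icc 3 l, (B j : ℝ)) - 1) := by
      have h2 := congrArg (Nat.cast : ℕ → ℝ) hdeg
      push_cast [Nat.cast_sub h1] at h2
      linarith [h2]
    have hwnn : 0 ≤ ∑ j ∈ Finset.Icc 3 l, (B j : ℝ) :=
      Finset.sum_nonneg fun j _ => by positivity
    have hlp : 4 * π ≤ (l : ℝ) * π := by nlinarith
    have hkey : ((∑ i ∈ Finset.Icc 1 (l - 1), (i : ℝ) * (A i : ℝ))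
        + (∑ j ∈ Finset.Icc 3 l, (j : ℝ) * (B j : ℝ))) * π
        = (2 * ((l : ℝ) + (∑ j ∈ Finset.Icc 3 l, (B j : ℝ)) - 1)) * π := by
      rw [hdeg']
    rw [heqA] at hsumA
    rw [heqB] at hsumB
    rw [hA2] at hsumA
    linarith [hsumA, hsumB, hkey, hwnn, hlp]
end

section
/- Fix an integer l ≥ 4 and nonnegative integers A₁, …, A_{l−1}, B₃, …, B_l with w := ∑_{j=3}^{l} B_j satisfying ∑_{i=1}^{l−1} A_i = l and ∑_{i=1}^{l−1} i·A_i + ∑_{j=3}^{l} j·B_j = 2(l + w − 1). Define h(β) = ∑_{i=1}^{l−1} i·A_i·2·arcsin( 2·cos(π/(3i))·sin(β/2) ) + ∑_{j=3}^{l} j·B_j·2·arcsin( 2·cos(π/j)·sin(β/2) ) − 2π and K_l = 2·arcsin( 1 / (2·cos(π/(3(l−1)))) ). Then there exists a unique β ∈ [0, K_l] with h(β) = 0; moreover β > 0, and the corresponding inscribed circle radius is x determined by cosh x = 1 / (2·sin(β/2)). -/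
open Real

private lemma arcsin_cos' {θ : ℝ} (h0 : 0 ≤ θ) (h1 : θ ≤ π) :
    Real.arcsin (Real.cos θ) = π / 2 - θ := by
  rw [← Real.sin_pi_div_two_sub, Real.arcsin_sin (by linarith) (by linarith)]

set_option maxHeartbeats 1000000 in
theorem stmt_11 (l : ℕ) (hl : 4 ≤ l) (A B : ℕ → ℕ)
    (hA : ∑ i ∈ Finset.Icc 1 (l - 1), A i = l)
    (hdeg : ∑ i ∈ Finset.Icc 1 (l - 1), i * A i + ∑ j ∈ Finset.Icc 3 l, j * B j
      = 2 * (l + (∑ j ∈ Finset.Icc 3 l, B j) - 1)) :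
    (∃! β : ℝ,
      β ∈ Set.Icc 0 (2 * Real.arcsin (1 / (2 * Real.cos (π / (3 * ((l : ℝ) - 1)))))) ∧
      (∑ i ∈ Finset.Icc 1 (l - 1),
          (i : ℝ) * (A i : ℝ) *
            (2 * Real.arcsin (2 * Real.cos (π / (3 * (i : ℝ))) * Real.sin (β / 2)))) +
        (∑ j ∈ Finset.Icc 3 l,
          (j : ℝ) * (B j : ℝ) *
            (2 * Real.arcsin (2 * Real.cos (π / (j : ℝ)) * Real.sin (β / 2)))) -
        2 * π = 0) ∧
    (∀ β : ℝ,
      β ∈ Set.Icc 0 (2 * Real.arcsin (1 / (2 * Real.cos (π / (3 * ((l : ℝ) - 1)))))) →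
      (∑ i ∈ Finset.Icc 1 (l - 1),
          (i : ℝ) * (A i : ℝ) *
            (2 * Real.arcsin (2 * Real.cos (π / (3 * (i : ℝ))) * Real.sin (β / 2)))) +
        (∑ j ∈ Finset.Icc 3 l,
          (j : ℝ) * (B j : ℝ) *
            (2 * Real.arcsin (2 * Real.cos (π / (j : ℝ)) * Real.sin (β / 2)))) -
        2 * π = 0 →
      0 < β ∧ ∃ x : ℝ, 0 < x ∧ Real.cosh x = 1 / (2 * Real.sin (β / 2))) := by
  have hl1 : (4:ℝ) ≤ (l:ℝ) := by exact_mod_cast hl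
  have hpi := Real.pi_pos
  set C : ℝ := Real.cos (π / (3 * ((l : ℝ) - 1))) with hC
  set K : ℝ := 2 * Real.arcsin (1 / (2 * C)) with hK
  set f : ℝ → ℝ := fun β =>
      (∑ i ∈ Finset.Icc 1 (l - 1),
          (i : ℝ) * (A i : ℝ) *
            (2 * Real.arcsin (2 * Real.cos (π / (3 * (i : ℝ))) * Real.sin (β / 2)))) +
        (∑ j ∈ Finset.Icc 3 l,
          (j : ℝ) * (B j : ℝ) *
            (2 * Real.arcsin (2 * Real.cos (π / (j : ℝ)) * Real.sin (β / 2)))) -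
        2 * π with hf
  -- basic bounds on C
  have hang_pos : 0 < π / (3 * ((l : ℝ) - 1)) := div_pos hpi (by linarith)
  have hang_le : π / (3 * ((l : ℝ) - 1)) ≤ π / 9 :=
    div_le_div_of_nonneg_left hpi.le (by norm_num) (by linarith)
  have hCpos : 0 < C := by
    rw [hC]
    exact Real.cos_pos_of_mem_Ioo ⟨by linarith, by linarith⟩
  have hChalf : 1 / 2 ≤ C := by
    rw [hC, ← Real.cos_pi_div_three]
    exact Real.cos_le_cos_of_nonneg_of_le_pi hang_pos.le (by linarith) (by linarith)
  have hCle1 : C ≤ 1 := hC ▸ Real.cos_le_one _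
  have hargle : 1 / (2 * C) ≤ 1 := by rw [div_le_one (by linarith)]; linarith
  have harg0 : 0 < 1 / (2 * C) := by positivity
  have hKhalf : K / 2 = Real.arcsin (1 / (2 * C)) := by rw [hK]; ring
  have hsinK : Real.sin (K / 2) = 1 / (2 * C) := by
    rw [hKhalf, Real.sin_arcsin (by linarith) hargle]
  have hK0 : 0 ≤ K := by
    have := Real.arcsin_nonneg.2 harg0.le
    rw [hK]; linarith
  have hKpi : K ≤ π := by
    have := Real.arcsin_le_pi_div_two (1 / (2 * C))
    rw [hK]; linarith
  have hπ3K : π / 3 ≤ K := by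
    have h6 : Real.arcsin (1 / 2) = π / 6 := by
      rw [← Real.sin_pi_div_six, Real.arcsin_sin (by linarith) (by linarith)]
    have hle : (1:ℝ) / 2 ≤ 1 / (2 * C) :=
      one_div_le_one_div_of_le (by linarith) (by linarith)
    have := Real.monotone_arcsin hle
    rw [hK]; rw [h6] at this; linarith
  -- per-index facts
  have hfactsA : ∀ i ∈ Finset.Icc 1 (l - 1),
      (1:ℝ) ≤ (i:ℝ) ∧ 0 < Real.cos (π / (3 * (i : ℝ))) ∧ Real.cos (π / (3 * (i : ℝ))) ≤ C ∧
        0 ≤ π / (3 * (i : ℝ)) ∧ π / (3 * (i : ℝ)) ≤ π := by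
    intro i hi
    rw [Finset.mem_Icc] at hi
    have h1 : (1:ℝ) ≤ (i:ℝ) := by exact_mod_cast hi.1
    have h2 : (i:ℝ) ≤ (l:ℝ) - 1 := by
      have h2' : (i:ℝ) ≤ ((l-1:ℕ):ℝ) := by exact_mod_cast hi.2
      rwa [Nat.cast_sub (by omega), Nat.cast_one] at h2'
    have hθpos : 0 < π / (3 * (i:ℝ)) := div_pos hpi (by linarith)
    have hθle : π / (3 * (i:ℝ)) ≤ π / 3 :=
      div_le_div_of_nonneg_left hpi.le (by norm_num) (by linarith)
    refine ⟨h1, Real.cos_pos_of_mem_Ioo ⟨by linarith, by linarith⟩, ?_, hθpos.le, by linarith⟩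
    rw [hC]
    exact Real.cos_le_cos_of_nonneg_of_le_pi hang_pos.le (by linarith)
      (div_le_div_of_nonneg_left hpi.le (by linarith) (by linarith))
  have hfactsB : ∀ j ∈ Finset.Icc 3 l,
      (3:ℝ) ≤ (j:ℝ) ∧ 0 < Real.cos (π / (j : ℝ)) ∧ Real.cos (π / (j : ℝ)) ≤ C ∧
        0 ≤ π / (j : ℝ) ∧ π / (j : ℝ) ≤ π := by
    intro j hj
    rw [Finset.mem_Icc] at hj
    have h1 : (3:ℝ) ≤ (j:ℝ) := by exact_mod_cast hj.1
    have h2 : (j:ℝ) ≤ (l:ℝ) := by exact_mod_cast hj.2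
    have hθpos : 0 < π / (j:ℝ) := div_pos hpi (by linarith)
    have hθle : π / (j:ℝ) ≤ π / 3 :=
      div_le_div_of_nonneg_left hpi.le (by norm_num) (by linarith)
    refine ⟨h1, Real.cos_pos_of_mem_Ioo ⟨by linarith, by linarith⟩, ?_, hθpos.le, by linarith⟩
    rw [hC]
    exact Real.cos_le_cos_of_nonneg_of_le_pi hang_pos.le (by linarith)
      (div_le_div_of_nonneg_left hpi.le (by linarith) (by linarith))
  -- strict monotonicity
  have key_mono : StrictMonoOn f (Set.Icc 0 K) := by
    rintro β₁ ⟨hb10, hb1K⟩ β₂ ⟨hb20, hb2K⟩ hlt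
    have hs12 : Real.sin (β₁ / 2) < Real.sin (β₂ / 2) :=
      Real.strictMonoOn_sin ⟨by linarith, by linarith⟩ ⟨by linarith, by linarith⟩ (by linarith)
    have hs1 : 0 ≤ Real.sin (β₁ / 2) :=
      Real.sin_nonneg_of_nonneg_of_le_pi (by linarith) (by linarith)
    have hs2le : Real.sin (β₂ / 2) ≤ 1 / (2 * C) := by
      rw [← hsinK]
      have hKmem : K / 2 ∈ Set.Icc (-(π/2)) (π/2) := by
        constructor <;> [linarith; linarith]
      exact Real.strictMonoOn_sin.monotoneOn ⟨by linarith, by linarith⟩ hKmem (by linarith)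
    have harc : ∀ θ : ℝ, 0 < Real.cos θ → Real.cos θ ≤ C →
        Real.arcsin (2 * Real.cos θ * Real.sin (β₁ / 2)) <
          Real.arcsin (2 * Real.cos θ * Real.sin (β₂ / 2)) := by
      intro θ h1 h2
      have harg1 : 0 ≤ 2 * Real.cos θ * Real.sin (β₁ / 2) := by positivity
      have harg2 : 2 * Real.cos θ * Real.sin (β₂ / 2) ≤ 1 := by
        have e0 : 0 ≤ Real.sin (β₂ / 2) := by linarith
        have e1 : 2 * Real.cos θ * Real.sin (β₂ / 2) ≤ 2 * C * Real.sin (β₂ / 2) := by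
          nlinarith
        have e2 : 2 * C * Real.sin (β₂ / 2) ≤ 2 * C * (1 / (2 * C)) := by nlinarith
        have e3 : 2 * C * (1 / (2 * C)) = 1 := by field_simp
        linarith
      have hlt' : 2 * Real.cos θ * Real.sin (β₁ / 2) < 2 * Real.cos θ * Real.sin (β₂ / 2) := by
        nlinarith
      exact Real.strictMonoOn_arcsin ⟨by linarith, by linarith⟩ ⟨by linarith, by linarith⟩ hlt'
    obtain ⟨i₀, hi₀, hAi₀⟩ : ∃ i ∈ Finset.Icc 1 (l - 1), A i ≠ 0 := by
      by_contra hcon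
      push_neg at hcon
      have : ∑ i ∈ Finset.Icc 1 (l - 1), A i = 0 := Finset.sum_eq_zero hcon
      omega
    have hsum1 :
        (∑ i ∈ Finset.Icc 1 (l - 1), (i : ℝ) * (A i : ℝ) *
            (2 * Real.arcsin (2 * Real.cos (π / (3 * (i : ℝ))) * Real.sin (β₁ / 2)))) <
        (∑ i ∈ Finset.Icc 1 (l - 1), (i : ℝ) * (A i : ℝ) *
            (2 * Real.arcsin (2 * Real.cos (π / (3 * (i : ℝ))) * Real.sin (β₂ / 2)))) := by
      apply Finset.sum_lt_sum
      · intro i hi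
        obtain ⟨h1, hcpos, hcle, -, -⟩ := hfactsA i hi
        have := harc _ hcpos hcle
        have hco : (0:ℝ) ≤ (i:ℝ) * (A i : ℝ) := by positivity
        nlinarith
      · refine ⟨i₀, hi₀, ?_⟩
        obtain ⟨h1, hcpos, hcle, -, -⟩ := hfactsA i₀ hi₀
        have := harc _ hcpos hcle
        have hco : (0:ℝ) < (i₀:ℝ) * (A i₀ : ℝ) := by
          have : (1:ℝ) ≤ (A i₀ : ℝ) := by exact_mod_cast Nat.one_le_iff_ne_zero.2 hAi₀
          nlinarith
        nlinarith
    have hsum2 :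
        (∑ j ∈ Finset.Icc 3 l, (j : ℝ) * (B j : ℝ) *
            (2 * Real.arcsin (2 * Real.cos (π / (j : ℝ)) * Real.sin (β₁ / 2)))) ≤
        (∑ j ∈ Finset.Icc 3 l, (j : ℝ) * (B j : ℝ) *
            (2 * Real.arcsin (2 * Real.cos (π / (j : ℝ)) * Real.sin (β₂ / 2)))) := by
      apply Finset.sum_le_sum
      intro j hj
      obtain ⟨h1, hcpos, hcle, -, -⟩ := hfactsB j hj
      have := harc _ hcpos hcle
      have hco : (0:ℝ) ≤ (j:ℝ) * (B j : ℝ) := by positivity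
      nlinarith
    simp only [hf]
    linarith
  -- value at 0
  have hf0 : f 0 = -(2 * π) := by
    simp only [hf]
    norm_num
  -- value at π/3
  have hsin6 : Real.sin (π / 3 / 2) = 1 / 2 := by
    rw [show π / 3 / 2 = π / 6 by ring, Real.sin_pi_div_six]
  have htermA : ∀ i ∈ Finset.Icc 1 (l - 1),
      (i : ℝ) * (A i : ℝ) *
          (2 * Real.arcsin (2 * Real.cos (π / (3 * (i : ℝ))) * Real.sin (π / 3 / 2)))
        = (i : ℝ) * (A i : ℝ) * π - (A i : ℝ) * (2 * π / 3) := by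
    intro i hi
    obtain ⟨h1, hcpos, hcle, hθ0, hθπ⟩ := hfactsA i hi
    have hine : (i:ℝ) ≠ 0 := by linarith
    rw [hsin6, show 2 * Real.cos (π / (3 * (i:ℝ))) * (1/2) = Real.cos (π / (3 * (i:ℝ))) by ring,
      arcsin_cos' hθ0 hθπ]
    field_simp
  have htermB : ∀ j ∈ Finset.Icc 3 l,
      (j : ℝ) * (B j : ℝ) *
          (2 * Real.arcsin (2 * Real.cos (π / (j : ℝ)) * Real.sin (π / 3 / 2)))
        = (j : ℝ) * (B j : ℝ) * π - (B j : ℝ) * (2 * π) := by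
    intro j hj
    obtain ⟨h1, hcpos, hcle, hθ0, hθπ⟩ := hfactsB j hj
    have hjne : (j:ℝ) ≠ 0 := by linarith
    rw [hsin6, show 2 * Real.cos (π / (j:ℝ)) * (1/2) = Real.cos (π / (j:ℝ)) by ring,
      arcsin_cos' hθ0 hθπ]
    field_simp
  have hTA : (∑ i ∈ Finset.Icc 1 (l - 1), (A i : ℝ)) = (l : ℝ) := by
    exact_mod_cast congrArg (fun n : ℕ => (n:ℝ)) hA
  have hSAB :
      (∑ i ∈ Finset.Icc 1 (l - 1), (i : ℝ) * (A i : ℝ)) +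
        (∑ j ∈ Finset.Icc 3 l, (j : ℝ) * (B j : ℝ)) + 2
      = 2 * (l : ℝ) + 2 * (∑ j ∈ Finset.Icc 3 l, (B j : ℝ)) := by
    have h2 : (∑ i ∈ Finset.Icc 1 (l - 1), i * A i) + (∑ j ∈ Finset.Icc 3 l, j * B j) + 2
        = 2 * l + 2 * (∑ j ∈ Finset.Icc 3 l, B j) := by omega
    exact_mod_cast h2
  have hfπ3 : f (π / 3) = 4 * π * ((l:ℝ) - 3) / 3 := by
    simp only [hf]
    rw [Finset.sum_congr rfl htermA, Finset.sum_congr rfl htermB,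
      Finset.sum_sub_distrib, Finset.sum_sub_distrib,
      ← Finset.sum_mul, ← Finset.sum_mul, ← Finset.sum_mul, ← Finset.sum_mul]
    linear_combination π * hSAB - (2 * π / 3) * hTA
  have hfπ3pos : 0 < f (π / 3) := by rw [hfπ3]; nlinarith
  have hπ3mem : π / 3 ∈ Set.Icc (0:ℝ) K := ⟨by linarith, hπ3K⟩
  have hKmem : K ∈ Set.Icc (0:ℝ) K := ⟨hK0, le_rfl⟩
  have hfK : 0 < f K :=
    lt_of_lt_of_le hfπ3pos (key_mono.monotoneOn hπ3mem hKmem hπ3K)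
  -- continuity
  have hcont : Continuous f := by
    rw [hf]
    apply Continuous.sub _ continuous_const
    apply Continuous.add <;>
    · apply continuous_finset_sum
      intro i _
      apply Continuous.mul continuous_const
      apply Continuous.mul continuous_const
      exact Real.continuous_arcsin.comp
        (Continuous.mul continuous_const (Real.continuous_sin.comp (continuous_id.div_const 2)))
  -- existence via IVT
  obtain ⟨β₀, hβ₀mem, hβ₀⟩ : ∃ β₀ ∈ Set.Icc (0:ℝ) K, f β₀ = 0 := by
    have h0mem : (0:ℝ) ∈ Set.Icc (f 0) (f K) := ⟨by rw [hf0]; linarith, hfK.le⟩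
    obtain ⟨β₀, hm, he⟩ := intermediate_value_Icc hK0 hcont.continuousOn h0mem
    exact ⟨β₀, hm, he⟩
  -- main bundled statement
  have main : (∃! β : ℝ, β ∈ Set.Icc 0 K ∧ f β = 0) ∧
      (∀ β : ℝ, β ∈ Set.Icc 0 K → f β = 0 →
        0 < β ∧ ∃ x : ℝ, 0 < x ∧ Real.cosh x = 1 / (2 * Real.sin (β / 2))) := by
    constructor
    · refine ⟨β₀, ⟨hβ₀mem, hβ₀⟩, ?_⟩
      rintro y ⟨hymem, hy⟩
      exact key_mono.injOn hymem hβ₀mem (by rw [hy, hβ₀])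
    · intro β hmem hroot
      have hβpos : 0 < β := by
        rcases (lt_or_eq_of_le hmem.1) with h | h
        · exact h
        · exfalso; rw [← h] at hroot; rw [hf0] at hroot; linarith
      have hβlt : β < π / 3 := by
        by_contra hcon
        push_neg at hcon
        have h2 := key_mono.monotoneOn hπ3mem hmem hcon
        rw [hroot] at h2
        exact absurd h2 (not_le.mpr hfπ3pos)
      have hs0 : 0 < Real.sin (β / 2) :=
        Real.sin_pos_of_pos_of_lt_pi (by linarith) (by linarith)
      have hslt : Real.sin (β / 2) < 1 / 2 := by
        have := Real.strictMonoOn_sin (by constructor <;> [linarith; linarith] :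
            β / 2 ∈ Set.Icc (-(π/2)) (π/2)) ⟨by linarith, by linarith⟩
            (by linarith : β / 2 < π / 6)
        rwa [Real.sin_pi_div_six] at this
      refine ⟨hβpos, ?_⟩
      set y : ℝ := 1 / (2 * Real.sin (β / 2)) with hy
      have hy1 : 1 < y := by
        rw [hy, lt_div_iff₀ (by linarith)]; linarith
      have hyT : y ≤ Real.cosh (2 * y) := by
        have h1 : Real.exp (2 * y) / 2 ≤ Real.cosh (2 * y) := by
          rw [Real.cosh_eq]
          have := Real.exp_pos (-(2 * y))
          linarith
        have h2 : 2 * y + 1 ≤ Real.exp (2 * y) := Real.add_one_le_exp (2 * y)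
        linarith
      obtain ⟨x, hxmem, hx⟩ := intermediate_value_Icc (by linarith : (0:ℝ) ≤ 2 * y)
        Real.continuous_cosh.continuousOn
        (⟨by rw [Real.cosh_zero]; linarith, hyT⟩ : y ∈ Set.Icc (Real.cosh 0) (Real.cosh (2*y)))
      refine ⟨x, ?_, hx⟩
      rcases (lt_or_eq_of_le hxmem.1) with h | h
      · exact h
      · exfalso; rw [← h, Real.cosh_zero] at hx; linarith
  exact main
end

section
/- Fix an integer l ≥ 4 and consider the maximal Diophantine solution A₁ = l, A_i = 0 for 2 ≤ i ≤ l−1, B₃ = l − 2, B_j = 0 for 4 ≤ j ≤ l. Then the function h(β) = ∑_{i=1}^{l−1} i·A_i·2·arcsin( 2·cos(π/(3i))·sin(β/2) ) + ∑_{j=3}^{l} j·B_j·2·arcsin( 2·cos(π/j)·sin(β/2) ) − 2π equals (4l − 6)·β − 2π for all β ∈ [0, π]; in particular its unique root in [0, π] is β = 2π/(4l − 6), and the corresponding radius x satisfies cosh x = 1 / (2·sin(π/(4l − 6))). -/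
open Real

theorem stmt_12 (l : ℕ) (hl : 4 ≤ l) (A B : ℕ → ℕ)
    (hA1 : A 1 = l) (hA : ∀ i, 2 ≤ i → i ≤ l - 1 → A i = 0)
    (hB3 : B 3 = l - 2) (hB : ∀ j, 4 ≤ j → j ≤ l → B j = 0) :
    (∀ β ∈ Set.Icc (0 : ℝ) π,
      (∑ i ∈ Finset.Icc 1 (l - 1),
          (i : ℝ) * (A i : ℝ) *
            (2 * Real.arcsin (2 * Real.cos (π / (3 * (i : ℝ))) * Real.sin (β / 2)))) +
        (∑ j ∈ Finset.Icc 3 l,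
          (j : ℝ) * (B j : ℝ) *
            (2 * Real.arcsin (2 * Real.cos (π / (j : ℝ)) * Real.sin (β / 2)))) -
        2 * π = (4 * (l : ℝ) - 6) * β - 2 * π) ∧
    (∀ β ∈ Set.Icc (0 : ℝ) π,
      ((∑ i ∈ Finset.Icc 1 (l - 1),
          (i : ℝ) * (A i : ℝ) *
            (2 * Real.arcsin (2 * Real.cos (π / (3 * (i : ℝ))) * Real.sin (β / 2)))) +
        (∑ j ∈ Finset.Icc 3 l,
          (j : ℝ) * (B j : ℝ) *
            (2 * Real.arcsin (2 * Real.cos (π / (j : ℝ)) * Real.sin (β / 2)))) -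
        2 * π = 0 ↔ β = 2 * π / (4 * (l : ℝ) - 6))) ∧
    (∃ x : ℝ, 0 < x ∧
      Real.cosh x = 1 / (2 * Real.sin (π / (4 * (l : ℝ) - 6)))) := by
  have hl4 : (4 : ℝ) ≤ (l : ℝ) := by exact_mod_cast hl
  have hkey : ∀ β ∈ Set.Icc (0 : ℝ) π,
      (∑ i ∈ Finset.Icc 1 (l - 1),
          (i : ℝ) * (A i : ℝ) *
            (2 * Real.arcsin (2 * Real.cos (π / (3 * (i : ℝ))) * Real.sin (β / 2)))) +
        (∑ j ∈ Finset.Icc 3 l,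
          (j : ℝ) * (B j : ℝ) *
            (2 * Real.arcsin (2 * Real.cos (π / (j : ℝ)) * Real.sin (β / 2)))) -
        2 * π = (4 * (l : ℝ) - 6) * β - 2 * π := by
    intro β hβ
    obtain ⟨hβ0, hβπ⟩ := hβ
    have harc : Real.arcsin (Real.sin (β / 2)) = β / 2 :=
      Real.arcsin_sin (by linarith [Real.pi_pos]) (by linarith)
    have hS1 : (∑ i ∈ Finset.Icc 1 (l - 1),
        (i : ℝ) * (A i : ℝ) *
          (2 * Real.arcsin (2 * Real.cos (π / (3 * (i : ℝ))) * Real.sin (β / 2))))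
        = (l : ℝ) * β := by
      rw [Finset.sum_eq_single 1]
      · rw [show (3 : ℝ) * ((1 : ℕ) : ℝ) = 3 by norm_num, Real.cos_pi_div_three, hA1]
        push_cast
        rw [show (2 : ℝ) * (1 / 2) * Real.sin (β / 2) = Real.sin (β / 2) by ring, harc]
        ring
      · intro i hi hne
        simp only [Finset.mem_Icc] at hi
        have h2 : 2 ≤ i := by omega
        rw [hA i h2 hi.2]
        simp
      · intro h
        simp only [Finset.mem_Icc] at h
        omega
    have hS2 : (∑ j ∈ Finset.Icc 3 l,
        (j : ℝ) * (B j : ℝ) *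
          (2 * Real.arcsin (2 * Real.cos (π / (j : ℝ)) * Real.sin (β / 2))))
        = 3 * ((l : ℝ) - 2) * β := by
      rw [Finset.sum_eq_single 3]
      · rw [show ((3 : ℕ) : ℝ) = 3 by norm_num, Real.cos_pi_div_three, hB3]
        have : ((l - 2 : ℕ) : ℝ) = (l : ℝ) - 2 := by
          have : 2 ≤ l := by omega
          push_cast [this]; ring
        rw [this,
          show (2 : ℝ) * (1 / 2) * Real.sin (β / 2) = Real.sin (β / 2) by ring, harc]
        ring
      · intro j hj hne
        simp only [Finset.mem_Icc] at hj
        have h4 : 4 ≤ j := by omega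
        rw [hB j h4 hj.2]
        simp
      · intro h
        simp only [Finset.mem_Icc] at h
        omega
    rw [hS1, hS2]
    ring
  refine ⟨hkey, ?_, ?_⟩
  · intro β hβ
    rw [hkey β hβ]
    constructor
    · intro h
      have hne : (4 : ℝ) * (l : ℝ) - 6 ≠ 0 := by nlinarith
      field_simp
      nlinarith
    · intro h
      subst h
      have hne : (4 : ℝ) * (l : ℝ) - 6 ≠ 0 := by nlinarith
      field_simp
      ring
  · -- existence of x
    set θ : ℝ := π / (4 * (l : ℝ) - 6) with hθ
    have hden : (10 : ℝ) ≤ 4 * (l : ℝ) - 6 := by nlinarith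
    have hθpos : 0 < θ := div_pos Real.pi_pos (by linarith)
    have hθlt : θ < π / 6 := by
      rw [hθ, div_lt_div_iff₀ (by linarith) (by norm_num)]
      nlinarith [Real.pi_pos]
    have hsinpos : 0 < Real.sin θ := Real.sin_pos_of_pos_of_lt_pi hθpos
      (by linarith [Real.pi_pos])
    have hsinlt : Real.sin θ < 1 / 2 := by
      have := Real.strictMonoOn_sin (by constructor <;> [linarith [Real.pi_pos]; linarith]
        : θ ∈ Set.Icc (-(π/2)) (π/2))
        (by constructor <;> [linarith [Real.pi_pos]; linarith [Real.pi_pos]]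
        : (π/6 : ℝ) ∈ Set.Icc (-(π/2)) (π/2)) hθlt
      rwa [Real.sin_pi_div_six] at this
    set y : ℝ := 1 / (2 * Real.sin θ) with hy
    have hy1 : 1 < y := by
      rw [hy, lt_div_iff₀ (by positivity)]
      linarith
    have hcosh2y : y ≤ Real.cosh (2 * y) := by
      have h1 : Real.exp (2 * y) = (Real.exp y) ^ 2 := by
        rw [sq, ← Real.exp_add]; ring_nf
      have h2 : (1 + y) ^ 2 ≤ (Real.exp y) ^ 2 := by
        have := Real.add_one_le_exp y
        nlinarith [Real.exp_pos y]
      have h3 : Real.exp (2 * y) / 2 ≤ Real.cosh (2 * y) := by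
        rw [Real.cosh_eq]
        have := Real.exp_pos (-(2 * y))
        linarith
      nlinarith
    have hIVT : ∃ x ∈ Set.Icc (0 : ℝ) (2 * y), Real.cosh x = y := by
      have hc : ContinuousOn Real.cosh (Set.Icc 0 (2 * y)) :=
        Real.continuous_cosh.continuousOn
      have := intermediate_value_Icc (by linarith : (0:ℝ) ≤ 2 * y) hc
      have hmem : y ∈ Set.Icc (Real.cosh 0) (Real.cosh (2 * y)) := by
        rw [Real.cosh_zero]; exact ⟨le_of_lt hy1, hcosh2y⟩
      exact this hmem
    obtain ⟨x, hx, hxc⟩ := hIVT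
    refine ⟨x, ?_, hxc⟩
    rcases lt_or_eq_of_le hx.1 with h | h
    · exact h
    · exfalso
      rw [← h, Real.cosh_zero] at hxc
      linarith
end

section
/- Fix an integer l ≥ 4 and nonnegative integers A₁, …, A_{l−1}, B₃, …, B_l with w := ∑_{j=3}^{l} B_j satisfying ∑_{i=1}^{l−1} A_i = l and ∑_{i=1}^{l−1} i·A_i + ∑_{j=3}^{l} j·B_j = 2(l + w − 1). Define h(β) = ∑_{i=1}^{l−1} i·A_i·2·arcsin( 2·cos(π/(3i))·sin(β/2) ) + ∑_{j=3}^{l} j·B_j·2·arcsin( 2·cos(π/j)·sin(β/2) ) − 2π and K_l = 2·arcsin( 1 / (2·cos(π/(3(l−1)))) ). If β ∈ (0, K_l] satisfies h(β) = 0, then β ≥ 2π/(4l − 6); equivalently, the inscribed circle radius x determined by cosh x = 1/(2·sin(β/2)) satisfies cosh x ≤ 1 / (2·sin(π/(4l − 6))). Equality is attained exactly for the maximal solution A₁ = l, B₃ = l − 2 (all other A_i, B_j zero). -/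
open Real

lemma pi_sq_bounds : 9.8696 < π^2 ∧ π^2 < 9.8696066 ∧ π^4 < 97.40914 := by
  have hpl : π < 3.141593 := pi_lt_d6
  have hpg : 3.141592 < π := pi_gt_d6
  have h0 : (0:ℝ) < π := by linarith
  have h1 : π*π < 3.141593*3.141593 := mul_lt_mul'' hpl hpl (by linarith) (by linarith)
  have h2 : 3.141592*3.141592 < π*π := mul_lt_mul'' hpg hpg (by norm_num) (by norm_num)
  have hp2u : π^2 < 9.8696066 := by nlinarith
  have hp2l : 9.8696 < π^2 := by nlinarith
  have h3 : π^2*π^2 < 9.8696066*9.8696066 :=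
    mul_lt_mul'' hp2u hp2u (by positivity) (by positivity)
  refine ⟨hp2l, hp2u, by nlinarith⟩

set_option maxHeartbeats 1000000 in
lemma star_ineq (m : ℕ) (hm : 4 ≤ m) (s : ℝ) (hs : 10 ≤ s)
    (hsm : (4*(m:ℝ)-6)/3 ≤ s) :
    (3 - 6/(m:ℝ))^3 * (π/s)^2 / 4 ≤ 3 - 6/(m:ℝ) - 2*Real.cos (π/(m:ℝ)) := by
  obtain ⟨hp2l, hp2u, hp4u⟩ := pi_sq_bounds
  have hs0 : (0:ℝ) < s := by linarith
  rcases le_or_gt m 10 with hm10 | hm11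
  · -- m ∈ {4,...,10}
    have hps2 : (π/s)^2 ≤ π^2/100 := by
      have h1 : π/s ≤ π/10 := by
        apply div_le_div_of_nonneg_left (by positivity) (by norm_num) hs
      calc (π/s)^2 ≤ (π/10)^2 := pow_le_pow_left₀ (by positivity) h1 2
        _ = π^2/100 := by ring
    interval_cases m
    · rw [show ((4:ℕ):ℝ) = 4 by norm_num, Real.cos_pi_div_four]
      have h2 : Real.sqrt 2 < 1.4142136 := by
        nlinarith [Real.sq_sqrt (by norm_num : (2:ℝ) ≥ 0).le, Real.sqrt_nonneg 2]
      norm_num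
      linarith
    · rw [show ((5:ℕ):ℝ) = 5 by norm_num, Real.cos_pi_div_five]
      have h5 : Real.sqrt 5 < 2.2360680 := by
        nlinarith [Real.sq_sqrt (by norm_num : (5:ℝ) ≥ 0).le, Real.sqrt_nonneg 5]
      norm_num
      linarith
    · rw [show ((6:ℕ):ℝ) = 6 by norm_num, Real.cos_pi_div_six]
      have h3 : Real.sqrt 3 < 1.7320509 := by
        nlinarith [Real.sq_sqrt (by norm_num : (3:ℝ) ≥ 0).le, Real.sqrt_nonneg 3]
      norm_num
      linarith
    · -- m = 7
      have hb : Real.cos (π/7) ≤ 1 - (π/7)^2/2 + |π/7|^4 * (5/96) := by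
        have := abs_le.1 (Real.cos_bound (x := π/7)
          (by rw [abs_of_pos (by positivity)]; linarith [pi_lt_d6]))
        linarith [this.2]
      rw [show ((7:ℕ):ℝ) = 7 by norm_num]
      rw [abs_of_pos (by positivity : (0:ℝ) < π/7),
        show ((π/7)^2 : ℝ) = π^2/49 by ring, show ((π/7)^4 : ℝ) = π^4/2401 by ring] at hb
      norm_num
      linarith
    · -- m = 8
      have hb : Real.cos (π/8) ≤ 1 - (π/8)^2/2 + |π/8|^4 * (5/96) := by
        have := abs_le.1 (Real.cos_bound (x := π/8)
          (by rw [abs_of_pos (by positivity)]; linarith [pi_lt_d6]))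
        linarith [this.2]
      rw [show ((8:ℕ):ℝ) = 8 by norm_num]
      rw [abs_of_pos (by positivity : (0:ℝ) < π/8),
        show ((π/8)^2 : ℝ) = π^2/64 by ring, show ((π/8)^4 : ℝ) = π^4/4096 by ring] at hb
      have h2 : Real.sqrt 2 < 1.4142136 := by
        nlinarith [Real.sq_sqrt (by norm_num : (2:ℝ) ≥ 0).le, Real.sqrt_nonneg 2]
      have h22 : Real.sqrt (2 + Real.sqrt 2) < 1.8477591 := by
        nlinarith [Real.sq_sqrt (by positivity : (0:ℝ) ≤ 2 + Real.sqrt 2),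
          Real.sqrt_nonneg (2 + Real.sqrt 2), Real.sqrt_nonneg 2]
      norm_num [Real.cos_pi_div_eight]
      linarith
    · -- m = 9
      rw [show ((9:ℕ):ℝ) = 9 by norm_num]
      have hc := Real.cos_le_one (π/9)
      norm_num
      linarith
    · -- m = 10
      rw [show ((10:ℕ):ℝ) = 10 by norm_num]
      have hc := Real.cos_le_one (π/10)
      have hs' : (34:ℝ)/3 ≤ s := by norm_num at hsm ⊢; linarith
      have hps2' : (π/s)^2 ≤ 9*π^2/1156 := by
        have h1 : π/s ≤ 3*π/34 := by
          rw [div_le_div_iff₀ hs0 (by norm_num)]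
          have := mul_le_mul_of_nonneg_left (show (34:ℝ) ≤ 3*s by linarith) pi_pos.le
          linarith
        calc (π/s)^2 ≤ (3*π/34)^2 := pow_le_pow_left₀ (by positivity) h1 2
          _ = 9*π^2/1156 := by ring
      norm_num
      linarith
  · -- m ≥ 11
    have hm' : (11:ℝ) ≤ (m:ℝ) := by exact_mod_cast hm11
    have hm0 : (0:ℝ) < (m:ℝ) := by linarith
    have hd : (0:ℝ) < 4*(m:ℝ)-6 := by linarith
    have hcos := Real.cos_le_one (π/(m:ℝ))
    have hk0 : (0:ℝ) < 3 - 6/(m:ℝ) := by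
      have : 6/(m:ℝ) ≤ 6/11 := by
        apply div_le_div_of_nonneg_left (by norm_num) (by norm_num) hm'
      linarith
    have hk33 : (3 - 6/(m:ℝ))^3 ≤ 27 := by
      have h3 : 3 - 6/(m:ℝ) ≤ 3 := by
        have : (0:ℝ) < 6/(m:ℝ) := by positivity
        linarith
      calc (3 - 6/(m:ℝ))^3 ≤ 3^3 := pow_le_pow_left₀ hk0.le h3 3
        _ = 27 := by norm_num
    have hps : (π/s)^2 ≤ (3*π/(4*(m:ℝ)-6))^2 := by
      have h1 : π/s ≤ 3*π/(4*(m:ℝ)-6) := by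
        rw [div_le_div_iff₀ hs0 hd]
        have := mul_le_mul_of_nonneg_left (show 4*(m:ℝ)-6 ≤ 3*s by linarith) pi_pos.le
        linarith
      exact pow_le_pow_left₀ (by positivity) h1 2
    have hge : (0:ℝ) ≤ (m:ℝ) - 11 := by linarith
    have h1a : 243*π^2 ≤ 2399 := by linarith
    have h1 : 2399*(m:ℝ) ≤ 4*(4*(m:ℝ)-6)^2*((m:ℝ)-6) := by
      have p3 : (0:ℝ) ≤ ((m:ℝ)-11)^3 := pow_nonneg hge 3
      have p2 : (0:ℝ) ≤ ((m:ℝ)-11)^2 := sq_nonneg _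
      linarith [p3, p2, hge]
    have h1' : 243*π^2*(m:ℝ) ≤ 4*(4*(m:ℝ)-6)^2*((m:ℝ)-6) :=
      calc 243*π^2*(m:ℝ) = (243*π^2)*(m:ℝ) := by ring
        _ ≤ 2399*(m:ℝ) := mul_le_mul_of_nonneg_right h1a hm0.le
        _ ≤ 4*(4*(m:ℝ)-6)^2*((m:ℝ)-6) := h1
    have e2 : 27 * (3*π/(4*(m:ℝ)-6))^2/4 ≤ 1 - 6/(m:ℝ) := by
      rw [div_pow,
        show (27:ℝ) * ((3*π)^2/(4*(m:ℝ)-6)^2)/4 = (243*π^2)/(4*(4*(m:ℝ)-6)^2) by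
          field_simp; ring,
        show (1:ℝ) - 6/(m:ℝ) = ((m:ℝ)-6)/(m:ℝ) by field_simp,
        div_le_div_iff₀ (by positivity) hm0]
      linarith
    have e1 : (3 - 6/(m:ℝ))^3 * (π/s)^2 ≤ 27 * (3*π/(4*(m:ℝ)-6))^2 :=
      mul_le_mul hk33 hps (sq_nonneg (π/s)) (by norm_num)
    linarith


set_option maxHeartbeats 1000000 in
lemma KLm (m : ℕ) (hm : 4 ≤ m) (s t : ℝ) (hs : 10 ≤ s) (hsm : (4*(m:ℝ)-6)/3 ≤ s)
    (ht0 : 0 < t) (ht : t ≤ π/s) :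
    Real.arcsin (2*Real.cos (π/(m:ℝ)) * Real.sin t) < (3 - 6/(m:ℝ)) * t := by
  have hpl : π < 3.141593 := pi_lt_d6
  have hpg : 3.141592 < π := pi_gt_d6
  have hs0 : (0:ℝ) < s := by linarith
  have hm4 : (4:ℝ) ≤ (m:ℝ) := by exact_mod_cast hm
  have hm0 : (0:ℝ) < (m:ℝ) := by linarith
  set c := 2*Real.cos (π/(m:ℝ)) with hc
  set k := 3 - 6/(m:ℝ) with hkdef
  clear_value c k
  have hk_lb : (3:ℝ)/2 ≤ k := by
    have : 6/(m:ℝ) ≤ 6/4 :=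
      div_le_div_of_nonneg_left (by norm_num) (by norm_num) hm4
    rw [hkdef]; linarith
  have hk_ub : k < 3 := by
    have : (0:ℝ) < 6/(m:ℝ) := by positivity
    rw [hkdef]; linarith
  have hc_pos : 0 < c := by
    have h1 : π/(m:ℝ) ≤ π/4 :=
      div_le_div_of_nonneg_left pi_pos.le (by norm_num) hm4
    have h2 : 0 < π/(m:ℝ) := by positivity
    have h3 : Real.cos (π/(m:ℝ)) > 0 := by
      apply Real.cos_pos_of_mem_Ioo
      constructor
      · linarith [pi_pos]
      · linarith [pi_pos]
    rw [hc]; linarith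
  have htle : t ≤ π/10 :=
    le_trans ht (div_le_div_of_nonneg_left pi_pos.le (by norm_num) hs)
  have h1 : c * Real.sin t < c * t :=
    mul_lt_mul_of_pos_left (Real.sin_lt ht0) hc_pos
  have hstar := star_ineq m hm s hs hsm
  rw [← hc, ← hkdef] at hstar
  have ht2 : t^2 ≤ (π/s)^2 := pow_le_pow_left₀ ht0.le ht 2
  have h3 : c*t ≤ k*t - k^3*t^3/4 := by
    have hk3 : (0:ℝ) ≤ k^3 := by positivity
    have e : k^3*t^2 ≤ k^3*(π/s)^2 := mul_le_mul_of_nonneg_left ht2 hk3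
    have e2 := mul_le_mul_of_nonneg_right hstar ht0.le
    have e3 := mul_le_mul_of_nonneg_right e ht0.le
    nlinarith [e2, e3]
  have hkt0 : 0 < k*t := by positivity
  have hkt1 : k*t ≤ 1 := by
    have : k*t ≤ 3*t := mul_le_mul_of_nonneg_right hk_ub.le ht0.le
    linarith
  have h4 := Real.sin_gt_sub_cube hkt0
  have h5 : c * Real.sin t < Real.sin (k*t) :=
    calc c * Real.sin t < c*t := h1
      _ ≤ k*t - k^3*t^3/4 := h3
      _ = k*t - (k*t)^3/4 := by ring
      _ < Real.sin (k*t) := by have := pow_pos hkt0 3; linarith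
  have hktpi : k*t ≤ π/2 := by linarith
  have hsinpos : 0 < Real.sin t :=
    Real.sin_pos_of_pos_of_lt_pi ht0 (by linarith)
  have hmem1 : c*Real.sin t ∈ Set.Icc (-1:ℝ) 1 := by
    have h0 : 0 ≤ c*Real.sin t := by positivity
    exact Set.mem_Icc.2 ⟨by linarith, by linarith [Real.sin_le_one (k*t)]⟩
  have hmem2 : Real.sin (k*t) ∈ Set.Icc (-1:ℝ) 1 :=
    Set.mem_Icc.2 ⟨Real.neg_one_le_sin _, Real.sin_le_one _⟩
  have h7 : Real.arcsin (c*Real.sin t) < Real.arcsin (Real.sin (k*t)) :=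
    Real.strictMonoOn_arcsin hmem1 hmem2 h5
  rwa [Real.arcsin_sin (by linarith) hktpi] at h7


set_option maxHeartbeats 2000000 in
theorem stmt_13 (l : ℕ) (hl : 4 ≤ l) (A B : ℕ → ℕ)
    (hA : ∑ i ∈ Finset.Icc 1 (l - 1), A i = l)
    (hdeg : ∑ i ∈ Finset.Icc 1 (l - 1), i * A i + ∑ j ∈ Finset.Icc 3 l, j * B j
      = 2 * (l + (∑ j ∈ Finset.Icc 3 l, B j) - 1))
    (β : ℝ)
    (hβ : β ∈ Set.Ioc 0 (2 * Real.arcsin (1 / (2 * Real.cos (π / (3 * ((l : ℝ) - 1)))))))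
    (hroot : (∑ i ∈ Finset.Icc 1 (l - 1),
          (i : ℝ) * (A i : ℝ) *
            (2 * Real.arcsin (2 * Real.cos (π / (3 * (i : ℝ))) * Real.sin (β / 2)))) +
        (∑ j ∈ Finset.Icc 3 l,
          (j : ℝ) * (B j : ℝ) *
            (2 * Real.arcsin (2 * Real.cos (π / (j : ℝ)) * Real.sin (β / 2)))) -
        2 * π = 0) :
    2 * π / (4 * (l : ℝ) - 6) ≤ β ∧
    (∀ x : ℝ, Real.cosh x = 1 / (2 * Real.sin (β / 2)) →
      Real.cosh x ≤ 1 / (2 * Real.sin (π / (4 * (l : ℝ) - 6)))) ∧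
    (β = 2 * π / (4 * (l : ℝ) - 6) ↔
      (A 1 = l ∧ (∀ i, 2 ≤ i → i ≤ l - 1 → A i = 0) ∧
        B 3 = l - 2 ∧ (∀ j, 4 ≤ j → j ≤ l → B j = 0))) := by
  obtain ⟨hb0, hble⟩ := hβ
  have hL : (4:ℝ) ≤ (l:ℝ) := by exact_mod_cast hl
  have hs10 : (10:ℝ) ≤ 4*(l:ℝ)-6 := by linarith
  have hs0 : (0:ℝ) < 4*(l:ℝ)-6 := by linarith
  have hβπ : β ≤ π := by
    have := Real.arcsin_le_pi_div_two (1 / (2 * Real.cos (π / (3 * ((l:ℝ) - 1)))))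
    linarith
  have hthalf : β/2 ≤ π/2 := by linarith
  have harcsin_eq : Real.arcsin (Real.sin (β/2)) = β/2 :=
    Real.arcsin_sin (by linarith) hthalf
  -- per-term bounds for the A-sum
  have keyA : β/2 ≤ π/(4*(l:ℝ)-6) →
      ∀ i ∈ Finset.Icc 1 (l-1),
        (i:ℝ)*((A i):ℝ)*(2*Real.arcsin (2*Real.cos (π/(3*(i:ℝ)))*Real.sin (β/2)))
          ≤ (3*(i:ℝ)-2)*((A i):ℝ)*β := by
    intro htle i hi
    obtain ⟨hi1, hi2⟩ := Finset.mem_Icc.1 hi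
    rcases eq_or_lt_of_le hi1 with rfl | h2
    · apply le_of_eq
      rw [show π/(3*((1:ℕ):ℝ)) = π/3 by norm_num, Real.cos_pi_div_three,
        show 2*((1:ℝ)/2) = 1 by norm_num, one_mul, harcsin_eq]
      push_cast; ring
    · have hi2' : (2:ℕ) ≤ i := h2
      have hicast : (2:ℝ) ≤ (i:ℝ) := by exact_mod_cast hi2'
      have hilcast : (i:ℝ) ≤ (l:ℝ)-1 := by
        have h : (i:ℝ) ≤ ((l-1:ℕ):ℝ) := by exact_mod_cast hi2
        rwa [Nat.cast_sub (by omega), Nat.cast_one] at h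
      have harc := KLm (3*i) (by omega) (4*(l:ℝ)-6) (β/2) hs10
        (by push_cast; linarith) (by linarith) htle
      rw [show (((3*i : ℕ)):ℝ) = 3*(i:ℝ) by push_cast; ring] at harc
      have hcoef : (0:ℝ) ≤ (i:ℝ)*((A i):ℝ) := by positivity
      calc (i:ℝ)*((A i):ℝ)*(2*Real.arcsin (2*Real.cos (π/(3*(i:ℝ)))*Real.sin (β/2)))
          ≤ (i:ℝ)*((A i):ℝ)*(2*((3 - 6/(3*(i:ℝ)))*(β/2))) := by
            apply mul_le_mul_of_nonneg_left _ hcoef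
            linarith
        _ = (3*(i:ℝ)-2)*((A i):ℝ)*β := by
            have hine : (i:ℝ) ≠ 0 := by positivity
            field_simp
            ring
  have keyAstrict : β/2 ≤ π/(4*(l:ℝ)-6) →
      ∀ i ∈ Finset.Icc 1 (l-1), 2 ≤ i → A i ≠ 0 →
        (i:ℝ)*((A i):ℝ)*(2*Real.arcsin (2*Real.cos (π/(3*(i:ℝ)))*Real.sin (β/2)))
          < (3*(i:ℝ)-2)*((A i):ℝ)*β := by
    intro htle i hi hi2' hne
    obtain ⟨hi1, hi2⟩ := Finset.mem_Icc.1 hi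
    have hicast : (2:ℝ) ≤ (i:ℝ) := by exact_mod_cast hi2'
    have hilcast : (i:ℝ) ≤ (l:ℝ)-1 := by
      have h : (i:ℝ) ≤ ((l-1:ℕ):ℝ) := by exact_mod_cast hi2
      rwa [Nat.cast_sub (by omega), Nat.cast_one] at h
    have harc := KLm (3*i) (by omega) (4*(l:ℝ)-6) (β/2) hs10
      (by push_cast; linarith) (by linarith) htle
    rw [show (((3*i : ℕ)):ℝ) = 3*(i:ℝ) by push_cast; ring] at harc
    have hcoef : (0:ℝ) < (i:ℝ)*((A i):ℝ) := by
      have : (1:ℝ) ≤ ((A i):ℝ) := by exact_mod_cast Nat.one_le_iff_ne_zero.2 hne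
      nlinarith
    calc (i:ℝ)*((A i):ℝ)*(2*Real.arcsin (2*Real.cos (π/(3*(i:ℝ)))*Real.sin (β/2)))
        < (i:ℝ)*((A i):ℝ)*(2*((3 - 6/(3*(i:ℝ)))*(β/2))) := by
          apply mul_lt_mul_of_pos_left _ hcoef
          linarith
      _ = (3*(i:ℝ)-2)*((A i):ℝ)*β := by
          have hine : (i:ℝ) ≠ 0 := by positivity
          field_simp
          ring
  -- per-term bounds for the B-sum
  have keyB : β/2 ≤ π/(4*(l:ℝ)-6) →
      ∀ j ∈ Finset.Icc 3 l,
        (j:ℝ)*((B j):ℝ)*(2*Real.arcsin (2*Real.cos (π/(j:ℝ))*Real.sin (β/2)))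
          ≤ (3*(j:ℝ)-6)*((B j):ℝ)*β := by
    intro htle j hj
    obtain ⟨hj1, hj2⟩ := Finset.mem_Icc.1 hj
    rcases eq_or_lt_of_le hj1 with rfl | h2
    · apply le_of_eq
      rw [show π/(((3:ℕ)):ℝ) = π/3 by norm_num, Real.cos_pi_div_three,
        show 2*((1:ℝ)/2) = 1 by norm_num, one_mul, harcsin_eq]
      push_cast; ring
    · have hj4 : (4:ℕ) ≤ j := h2
      have hjcast : (4:ℝ) ≤ (j:ℝ) := by exact_mod_cast hj4
      have hjlcast : (j:ℝ) ≤ (l:ℝ) := by exact_mod_cast hj2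
      have harc := KLm j (by omega) (4*(l:ℝ)-6) (β/2) hs10
        (by linarith) (by linarith) htle
      have hcoef : (0:ℝ) ≤ (j:ℝ)*((B j):ℝ) := by positivity
      calc (j:ℝ)*((B j):ℝ)*(2*Real.arcsin (2*Real.cos (π/(j:ℝ))*Real.sin (β/2)))
          ≤ (j:ℝ)*((B j):ℝ)*(2*((3 - 6/(j:ℝ))*(β/2))) := by
            apply mul_le_mul_of_nonneg_left _ hcoef
            linarith
        _ = (3*(j:ℝ)-6)*((B j):ℝ)*β := by
            have hjne : (j:ℝ) ≠ 0 := by positivity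
            field_simp
  have keyBstrict : β/2 ≤ π/(4*(l:ℝ)-6) →
      ∀ j ∈ Finset.Icc 3 l, 4 ≤ j → B j ≠ 0 →
        (j:ℝ)*((B j):ℝ)*(2*Real.arcsin (2*Real.cos (π/(j:ℝ))*Real.sin (β/2)))
          < (3*(j:ℝ)-6)*((B j):ℝ)*β := by
    intro htle j hj hj4 hne
    obtain ⟨hj1, hj2⟩ := Finset.mem_Icc.1 hj
    have hjcast : (4:ℝ) ≤ (j:ℝ) := by exact_mod_cast hj4
    have hjlcast : (j:ℝ) ≤ (l:ℝ) := by exact_mod_cast hj2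
    have harc := KLm j (by omega) (4*(l:ℝ)-6) (β/2) hs10
      (by linarith) (by linarith) htle
    have hcoef : (0:ℝ) < (j:ℝ)*((B j):ℝ) := by
      have : (1:ℝ) ≤ ((B j):ℝ) := by exact_mod_cast Nat.one_le_iff_ne_zero.2 hne
      nlinarith
    calc (j:ℝ)*((B j):ℝ)*(2*Real.arcsin (2*Real.cos (π/(j:ℝ))*Real.sin (β/2)))
        < (j:ℝ)*((B j):ℝ)*(2*((3 - 6/(j:ℝ))*(β/2))) := by
          apply mul_lt_mul_of_pos_left _ hcoef
          linarith
      _ = (3*(j:ℝ)-6)*((B j):ℝ)*β := by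
          have hjne : (j:ℝ) ≠ 0 := by positivity
          field_simp
  -- the total of the bounding sums
  have expand1 : (∑ i ∈ Finset.Icc 1 (l-1), (i:ℝ)*((A i):ℝ))*(3*β)
      - (∑ i ∈ Finset.Icc 1 (l-1), ((A i):ℝ))*(2*β)
      = ∑ i ∈ Finset.Icc 1 (l-1), (3*(i:ℝ)-2)*((A i):ℝ)*β := by
    rw [Finset.sum_mul, Finset.sum_mul, ← Finset.sum_sub_distrib]
    exact Finset.sum_congr rfl (fun i _ => by ring)
  have expand2 : (∑ j ∈ Finset.Icc 3 l, (j:ℝ)*((B j):ℝ))*(3*β)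
      - (∑ j ∈ Finset.Icc 3 l, ((B j):ℝ))*(6*β)
      = ∑ j ∈ Finset.Icc 3 l, (3*(j:ℝ)-6)*((B j):ℝ)*β := by
    rw [Finset.sum_mul, Finset.sum_mul, ← Finset.sum_sub_distrib]
    exact Finset.sum_congr rfl (fun j _ => by ring)
  have hcastdeg : (∑ i ∈ Finset.Icc 1 (l-1), (i:ℝ)*((A i):ℝ))
      + (∑ j ∈ Finset.Icc 3 l, (j:ℝ)*((B j):ℝ))
      = 2*(l:ℝ) + 2*(∑ j ∈ Finset.Icc 3 l, ((B j):ℝ)) - 2 := by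
    have h0 : (∑ i ∈ Finset.Icc 1 (l-1), i * A i) + (∑ j ∈ Finset.Icc 3 l, j * B j) + 2
        = 2*l + 2*(∑ j ∈ Finset.Icc 3 l, B j) := by omega
    have h1 := congrArg (fun n : ℕ => (n:ℝ)) h0
    push_cast at h1
    linarith
  have hcastA : (∑ i ∈ Finset.Icc 1 (l-1), ((A i):ℝ)) = (l:ℝ) := by
    have h1 := congrArg (fun n : ℕ => (n:ℝ)) hA
    push_cast at h1
    linarith
  have keysum : (∑ i ∈ Finset.Icc 1 (l-1), (3*(i:ℝ)-2)*((A i):ℝ)*β)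
      + (∑ j ∈ Finset.Icc 3 l, (3*(j:ℝ)-6)*((B j):ℝ)*β) = (4*(l:ℝ)-6)*β := by
    rw [← expand1, ← expand2]
    linear_combination (3*β)*hcastdeg - (2*β)*hcastA
  -- part 1
  have part1 : 2*π/(4*(l:ℝ)-6) ≤ β := by
    rcases le_or_gt β (2*π/(4*(l:ℝ)-6)) with hle | hgt
    · have htle : β/2 ≤ π/(4*(l:ℝ)-6) := by
        have : 2*π/(4*(l:ℝ)-6) = 2*(π/(4*(l:ℝ)-6)) := by ring
        linarith
      have h1 := Finset.sum_le_sum (keyA htle)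
      have h2 := Finset.sum_le_sum (keyB htle)
      rw [div_le_iff₀ hs0]
      linarith
    · linarith
  refine ⟨part1, ?_, ?_⟩
  -- part 2
  · intro x hx
    rw [hx]
    have hlt : π/(4*(l:ℝ)-6) < π := by
      apply div_lt_self pi_pos
      linarith
    have hpos : 0 < Real.sin (π/(4*(l:ℝ)-6)) :=
      Real.sin_pos_of_pos_of_lt_pi (by positivity) hlt
    have hmono : Real.sin (π/(4*(l:ℝ)-6)) ≤ Real.sin (β/2) := by
      apply Real.strictMonoOn_sin.monotoneOn
      · refine Set.mem_Icc.2 ⟨?_, ?_⟩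
        · have h0 : (0:ℝ) < π/(4*(l:ℝ)-6) := by positivity
          linarith [pi_pos]
        · have : π/(4*(l:ℝ)-6) ≤ π/2 := by
            apply div_le_div_of_nonneg_left pi_pos.le (by norm_num) (by linarith)
          linarith
      · exact Set.mem_Icc.2 ⟨by linarith, hthalf⟩
      · have : 2*π/(4*(l:ℝ)-6) = 2*(π/(4*(l:ℝ)-6)) := by ring
        linarith
    apply one_div_le_one_div_of_le (by positivity)
    linarith
  -- part 3
  · constructor
    · intro heq
      have htle : β/2 ≤ π/(4*(l:ℝ)-6) := by
        rw [heq]; apply le_of_eq; ring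
      have h2πeq : (4*(l:ℝ)-6)*β = 2*π := by
        rw [heq]; field_simp
      have hAz : ∀ i, 2 ≤ i → i ≤ l - 1 → A i = 0 := by
        intro i0 h2 hle0
        by_contra hne
        have hmem : i0 ∈ Finset.Icc 1 (l-1) := Finset.mem_Icc.2 ⟨by omega, hle0⟩
        have hstrA := Finset.sum_lt_sum (keyA htle)
          ⟨i0, hmem, keyAstrict htle i0 hmem h2 hne⟩
        have hB := Finset.sum_le_sum (keyB htle)
        linarith
      have hBz : ∀ j, 4 ≤ j → j ≤ l → B j = 0 := by
        intro j0 h4 hle0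
        by_contra hne
        have hmem : j0 ∈ Finset.Icc 3 l := Finset.mem_Icc.2 ⟨by omega, hle0⟩
        have hstrB := Finset.sum_lt_sum (keyB htle)
          ⟨j0, hmem, keyBstrict htle j0 hmem h4 hne⟩
        have hA' := Finset.sum_le_sum (keyA htle)
        linarith
      have hA1 : A 1 = l := by
        have h1 : ∑ i ∈ Finset.Icc 1 (l-1), A i = A 1 := by
          apply Finset.sum_eq_single_of_mem 1 (Finset.mem_Icc.2 ⟨le_refl 1, by omega⟩)
          intro b hb hbne
          obtain ⟨hb1, hb2⟩ := Finset.mem_Icc.1 hb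
          exact hAz b (by omega) hb2
        omega
      refine ⟨hA1, hAz, ?_, hBz⟩
      -- B 3 = l - 2
      have hP : ∑ i ∈ Finset.Icc 1 (l-1), i * A i = l := by
        have h1 : ∑ i ∈ Finset.Icc 1 (l-1), i * A i = 1 * A 1 := by
          apply Finset.sum_eq_single_of_mem 1 (Finset.mem_Icc.2 ⟨le_refl 1, by omega⟩)
          intro b hb hbne
          obtain ⟨hb1, hb2⟩ := Finset.mem_Icc.1 hb
          rw [hAz b (by omega) hb2, mul_zero]
        omega
      have hQ : ∑ j ∈ Finset.Icc 3 l, j * B j = 3 * B 3 := by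
        apply Finset.sum_eq_single_of_mem 3 (Finset.mem_Icc.2 ⟨le_refl 3, by omega⟩)
        intro b hb hbne
        obtain ⟨hb1, hb2⟩ := Finset.mem_Icc.1 hb
        rw [hBz b (by omega) hb2, mul_zero]
      have hW : ∑ j ∈ Finset.Icc 3 l, B j = B 3 := by
        apply Finset.sum_eq_single_of_mem 3 (Finset.mem_Icc.2 ⟨le_refl 3, by omega⟩)
        intro b hb hbne
        obtain ⟨hb1, hb2⟩ := Finset.mem_Icc.1 hb
        exact hBz b (by omega) hb2
      rw [hP, hQ, hW] at hdeg
      omega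
    · rintro ⟨hA1, hAz, hB3, hBz⟩
      have eA : (∑ i ∈ Finset.Icc 1 (l-1),
          (i:ℝ)*((A i):ℝ)*(2*Real.arcsin (2*Real.cos (π/(3*(i:ℝ)))*Real.sin (β/2))))
          = (l:ℝ)*(2*(β/2)) := by
        rw [Finset.sum_eq_single_of_mem 1 (Finset.mem_Icc.2 ⟨le_refl 1, by omega⟩)]
        · rw [show π/(3*((1:ℕ):ℝ)) = π/3 by norm_num, Real.cos_pi_div_three,
            show 2*((1:ℝ)/2) = 1 by norm_num, one_mul, harcsin_eq, hA1]
          push_cast; ring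
        · intro b hb hbne
          obtain ⟨hb1, hb2⟩ := Finset.mem_Icc.1 hb
          rw [hAz b (by omega) hb2]
          push_cast; ring
      have eB : (∑ j ∈ Finset.Icc 3 l,
          (j:ℝ)*((B j):ℝ)*(2*Real.arcsin (2*Real.cos (π/(j:ℝ))*Real.sin (β/2))))
          = 3*((l:ℝ)-2)*(2*(β/2)) := by
        rw [Finset.sum_eq_single_of_mem 3 (Finset.mem_Icc.2 ⟨le_refl 3, by omega⟩)]
        · rw [show π/(((3:ℕ)):ℝ) = π/3 by norm_num, Real.cos_pi_div_three,
            show 2*((1:ℝ)/2) = 1 by norm_num, one_mul, harcsin_eq, hB3]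
          rw [Nat.cast_sub (by omega)]
          push_cast; ring
        · intro b hb hbne
          obtain ⟨hb1, hb2⟩ := Finset.mem_Icc.1 hb
          rw [hBz b (by omega) hb2]
          push_cast; ring
      rw [eA, eB] at hroot
      rw [eq_div_iff hs0.ne']
      linarith
end

section
/- Let l ≥ 5 be an integer and let i be an integer with 1 ≤ i ≤ l − 1. Then arcsin( 2·sin(π/(4l−6))·cos(π/(3i)) ) < (3/π)·arcsin( 2·sin(π/(4l−6)) )·( π/2 − π/(3i) ). -/
set_option maxHeartbeats 1000000


open Real

theorem stmt_14 (l : ℕ) (hl : 5 ≤ l) (i : ℕ) (hi1 : 1 ≤ i) (hi2 : i ≤ l - 1) :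
    Real.arcsin (2 * Real.sin (π / (4 * (l : ℝ) - 6)) * Real.cos (π / (3 * (i : ℝ)))) <
      3 / π * Real.arcsin (2 * Real.sin (π / (4 * (l : ℝ) - 6))) *
        (π / 2 - π / (3 * (i : ℝ))) := by
  have hπ : 0 < π := Real.pi_pos
  have hπ4 : π < 3.15 := Real.pi_lt_d2
  have hlR : (5 : ℝ) ≤ (l : ℝ) := by exact_mod_cast hl
  have hd : (14 : ℝ) ≤ 4 * (l : ℝ) - 6 := by linarith
  set x : ℝ := π / (4 * (l : ℝ) - 6) with hxdef
  have hx0 : 0 < x := div_pos hπ (by linarith)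
  have hx14 : x ≤ π / 14 := by
    apply div_le_div_of_nonneg_left hπ.le (by norm_num) hd
  have hxlt : x < π := lt_of_le_of_lt hx14 (by linarith)
  have hsin0 : 0 < Real.sin x := Real.sin_pos_of_pos_of_lt_pi hx0 hxlt
  have hsinlt : Real.sin x < x := Real.sin_lt hx0
  have hs1 : 2 * Real.sin x < 1 := by
    have : x < 1 / 2 := lt_of_le_of_lt hx14 (by linarith)
    linarith
  set s : ℝ := 2 * Real.sin x with hsdef
  have hs0 : 0 < s := by positivity
  set a : ℝ := Real.arcsin s with hadef
  have ha0 : 0 < a := Real.arcsin_pos.2 hs0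
  have ha2 : a ≤ π / 2 := Real.arcsin_le_pi_div_two s
  have hsa : Real.sin a = s := Real.sin_arcsin (by linarith) hs1.le
  rcases eq_or_lt_of_le hi1 with h1 | h2
  · -- i = 1
    have hi : (i : ℝ) = 1 := by exact_mod_cast h1.symm
    rw [hi]
    have hc : Real.cos (π / (3 * (1 : ℝ))) = 1 / 2 := by
      norm_num [Real.cos_pi_div_three]
    rw [hc]
    have hrhs : 3 / π * a * (π / 2 - π / (3 * (1 : ℝ))) = a / 2 := by
      field_simp; ring
    rw [hrhs]
    -- s / 2 = sin(a/2) cos(a/2) < sin(a/2)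
    have hsin2 : Real.sin a = 2 * Real.sin (a / 2) * Real.cos (a / 2) := by
      have := Real.sin_two_mul (a / 2)
      rw [show 2 * (a / 2) = a by ring] at this
      exact this
    have ha20 : 0 < a / 2 := by linarith
    have ha2pi : a / 2 < π := by linarith
    have hsin2pos : 0 < Real.sin (a / 2) := Real.sin_pos_of_pos_of_lt_pi ha20 ha2pi
    have hcos2lt : Real.cos (a / 2) < 1 := by
      have := Real.strictAntiOn_cos (a := 0) (b := a / 2)
        (by constructor <;> [linarith; linarith]) (by constructor <;> linarith) ha20
      simpa [Real.cos_zero] using this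
    have hkey : s * (1 / 2) < Real.sin (a / 2) := by
      have : s = 2 * Real.sin (a / 2) * Real.cos (a / 2) := by rw [← hsa, hsin2]
      nlinarith
    calc Real.arcsin (s * (1 / 2)) < Real.arcsin (Real.sin (a / 2)) := by
          apply Real.strictMonoOn_arcsin _ _ hkey
          · constructor <;> nlinarith
          · constructor
            · linarith [Real.neg_one_le_sin (a / 2)]
            · exact Real.sin_le_one _
      _ = a / 2 := Real.arcsin_sin (by linarith) (by linarith)
  · -- i ≥ 2
    have hi2R : (2 : ℝ) ≤ (i : ℝ) := by exact_mod_cast h2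
    set θ : ℝ := π / (3 * (i : ℝ)) with hθdef
    have hθ0 : 0 < θ := div_pos hπ (by linarith)
    have hθ6 : θ ≤ π / 6 := by
      apply div_le_div_of_nonneg_left hπ.le (by norm_num) (by linarith)
    have hcos1 : Real.cos θ < 1 := by
      have := Real.strictAntiOn_cos (Set.mem_Icc.mpr ⟨le_refl 0, hπ.le⟩)
        (Set.mem_Icc.mpr ⟨hθ0.le, by linarith⟩) hθ0
      simpa [Real.cos_zero] using this
    have hcos0 : 0 ≤ Real.cos θ := Real.cos_nonneg_of_mem_Icc
      (Set.mem_Icc.mpr ⟨by linarith, by linarith⟩)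
    have hsc0 : 0 ≤ s * Real.cos θ := by positivity
    have hsc : s * Real.cos θ < s := mul_lt_of_lt_one_right hs0 hcos1
    have hlhs : Real.arcsin (s * Real.cos θ) < a := by
      apply Real.strictMonoOn_arcsin (Set.mem_Icc.mpr ⟨by linarith, by linarith⟩)
        (Set.mem_Icc.mpr ⟨by linarith, by linarith⟩) hsc
    have h3a : 0 < 3 / π * a := by positivity
    have heq : 3 / π * a * (π / 3) = a := by field_simp
    have hge : 3 / π * a * (π / 3) ≤ 3 / π * a * (π / 2 - θ) := by
      apply mul_le_mul_of_nonneg_left (by linarith) h3a.le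
    linarith
end

section
/- Let l ≥ 5 be an integer and let j be an integer with 3 ≤ j ≤ l. Then arcsin( 2·sin(π/(4l−6))·cos(π/j) ) < (3/π)·arcsin( 2·sin(π/(4l−6)) )·( π/2 − π/j ). -/
open Real

lemma arcsin_mul_lt_aux (c x : ℝ) (hc0 : 0 < c) (hc1 : c < 1) (hx0 : 0 < x) (hx1 : x ≤ 1) :
    Real.arcsin (c * x) < c * Real.arcsin x := by
  set y := Real.arcsin x with hy
  have hy0 : 0 < y := Real.arcsin_pos.mpr hx0
  have hy2 : y ≤ π / 2 := Real.arcsin_le_pi_div_two x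
  have hsx : Real.sin y = x := Real.sin_arcsin (by linarith) hx1
  have hyπ : y ≤ π := by linarith [Real.pi_pos]
  have key : c * x < Real.sin (c * y) := by
    have h := strictConcaveOn_sin_Icc.2
      (show (0:ℝ) ∈ Set.Icc 0 π from ⟨le_rfl, Real.pi_pos.le⟩)
      (show y ∈ Set.Icc 0 π from ⟨hy0.le, hyπ⟩) hy0.ne
      (show (0:ℝ) < 1 - c by linarith) hc0 (by ring)
    simp only [smul_eq_mul, Real.sin_zero, mul_zero, zero_add] at h
    calc c * x = c * Real.sin y := by rw [hsx]
    _ < Real.sin (c * y) := h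
  have hcy : c * y ≤ π / 2 := by nlinarith
  have hbound : Real.sin (c * y) ≤ 1 := Real.sin_le_one _
  have hcx1 : c * x ≤ 1 := by nlinarith
  have := Real.strictMonoOn_arcsin (a := c * x) (b := Real.sin (c * y))
    ⟨by nlinarith, hcx1⟩ ⟨by linarith [Real.neg_one_le_sin (c * y)], hbound⟩ key
  rwa [Real.arcsin_sin (by nlinarith) hcy] at this

theorem stmt_15 (l : ℕ) (hl : 5 ≤ l) (j : ℕ) (hj1 : 3 ≤ j) (hj2 : j ≤ l) :
    Real.arcsin (2 * Real.sin (π / (4 * (l : ℝ) - 6)) * Real.cos (π / (j : ℝ))) <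
      3 / π * Real.arcsin (2 * Real.sin (π / (4 * (l : ℝ) - 6))) *
        (π / 2 - π / (j : ℝ)) := by
  have hπ := Real.pi_pos
  have hl' : (14 : ℝ) ≤ 4 * (l : ℝ) - 6 := by
    have : (5 : ℝ) ≤ (l : ℝ) := by exact_mod_cast hl
    linarith
  have hj3 : (3 : ℝ) ≤ (j : ℝ) := by exact_mod_cast hj1
  set θ := π / (4 * (l : ℝ) - 6) with hθdef
  have hθ0 : 0 < θ := div_pos hπ (by linarith)
  have hθ14 : θ ≤ π / 14 := by
    apply div_le_div_of_nonneg_left hπ.le (by norm_num) hl'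
  set x := 2 * Real.sin θ with hxdef
  have hx0 : 0 < x := by
    have : 0 < Real.sin θ := Real.sin_pos_of_pos_of_lt_pi hθ0 (by
      have : π / 14 < π := by linarith
      linarith)
    linarith
  have hx1 : x ≤ 1 := by
    have h1 : Real.sin θ < θ := Real.sin_lt hθ0
    have h2 : π < 7 := by linarith [Real.pi_lt_d2]
    have : θ < 1 / 2 := by
      calc θ ≤ π / 14 := hθ14
      _ < 1 / 2 := by linarith
    linarith
  set c := Real.cos (π / (j : ℝ)) with hcdef
  have hpj0 : 0 < π / (j : ℝ) := div_pos hπ (by linarith)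
  have hpj3 : π / (j : ℝ) ≤ π / 3 := by
    apply div_le_div_of_nonneg_left hπ.le (by norm_num) hj3
  have hc0 : 0 < c := Real.cos_pos_of_mem_Ioo ⟨by linarith, by linarith⟩
  have hc1 : c < 1 := by
    calc c < Real.cos 0 := by
          apply Real.cos_lt_cos_of_nonneg_of_le_pi le_rfl (by linarith) hpj0
    _ = 1 := Real.cos_zero
  have hmain : Real.arcsin (c * x) < c * Real.arcsin x :=
    arcsin_mul_lt_aux c x hc0 hc1 hx0 hx1
  have harc : 0 < Real.arcsin x := Real.arcsin_pos.mpr hx0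
  -- coefficient bound : c ≤ 3/2 - 3/j
  have hcoef : c ≤ 3 / 2 - 3 / (j : ℝ) := by
    rcases le_or_gt 7 j with h7 | h7
    · have : (7 : ℝ) ≤ (j : ℝ) := by exact_mod_cast h7
      have : 3 / (j : ℝ) ≤ 3 / 7 := by
        apply div_le_div_of_nonneg_left (by norm_num) (by norm_num) this
      nlinarith
    · interval_cases j
      · rw [hcdef]; norm_num [Real.cos_pi_div_three]
      · rw [hcdef]
        norm_num [Real.cos_pi_div_four]
        rw [div_le_iff₀ (by norm_num : (0:ℝ) < 2)]
        nlinarith [Real.sq_sqrt (by norm_num : (2:ℝ) ≥ 0), Real.sqrt_nonneg 2]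
      · rw [hcdef]
        norm_num [Real.cos_pi_div_five]
        rw [div_le_iff₀ (by norm_num : (0:ℝ) < 4)]
        nlinarith [Real.sq_sqrt (by norm_num : (5:ℝ) ≥ 0), Real.sqrt_nonneg 5]
      · rw [hcdef]
        norm_num [Real.cos_pi_div_six]
        rw [div_le_iff₀ (by norm_num : (0:ℝ) < 2)]
        nlinarith [Real.sq_sqrt (by norm_num : (3:ℝ) ≥ 0), Real.sqrt_nonneg 3]
  have hcoef' : 3 / π * (π / 2 - π / (j : ℝ)) = 3 / 2 - 3 / (j : ℝ) := by
    field_simp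
  calc Real.arcsin (x * c) = Real.arcsin (c * x) := by rw [mul_comm]
    _ < c * Real.arcsin x := hmain
    _ ≤ (3 / 2 - 3 / (j : ℝ)) * Real.arcsin x := by nlinarith
    _ = 3 / π * Real.arcsin x * (π / 2 - π / (j : ℝ)) := by rw [← hcoef']; ring
end
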